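/- arXiv:1909.10612 — 14 statements merged into one kernel-verified Lean document; each statement's English description precedes it below -/
import Mathlib

section
/- Let n ≥ 2 be an integer, let k_0, …, k_{n−1}, γ_1, …, γ_n, θ, k, δ_1, δ_2 be positive reals, and set r_0 = 1 + Σ_{j=1}^n (1/j!)·(k_0⋯k_{j−1})/(γ_1⋯γ_j). Then the system of n+3 polynomial equations 0 = γ_1 x_1 − k_0 x_0 y_2; 0 = k_{j−1} x_{j−1} y_2 + (j+1)γ_{j+1} x_{j+1} − (k_j y_2 + jγ_j) x_j for 1 ≤ j ≤ n−2; 0 = k_{n−2} x_{n−2} y_2 + nγ_n(1 − Σ_{j=0}^{n−1} x_j) − (k_{n−1} y_2 + (n−1)γ_{n−1}) x_{n−1}; 0 = k(y_2 − y_1²) + δ_1(z − y_1); 0 = θ(−Σ_{j=0}^{n−1} k_j x_j y_2 + Σ_{j=1}^{n−1} jγ_j x_j + nγ_n(1 − Σ_{j=0}^{n−1} x_j)) − y_2 + y_1²; 0 = δ_2(r_0 x_0 − z), has exactly one solution (x_0,…,x_{n−1},y_1,y_2,z) with all coordinates nonnegative, namely x̄_0 = 1/r_0, x̄_j = (1/j!)·(k_0⋯k_{j−1})/(γ_1⋯γ_j)·(1/r_0)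 for 1 ≤ j ≤ n−1, and ȳ_1 = ȳ_2 = z̄ = 1. -/
/-- The steady-state equations of the nondimensional Hes1 gene expression model
with `n ≥ 2` binding sites have exactly one nonnegative solution, namely
`x̄_j = c_j / r_0` (with `c_0 = 1`), `ȳ_1 = ȳ_2 = z̄ = 1`. -/
theorem stmt_1 (n : ℕ) (hn : 2 ≤ n)
    (kk γ : ℕ → ℝ) (θ kp δ1 δ2 : ℝ)
    (hkk : ∀ j < n, 0 < kk j) (hγ : ∀ j ∈ Finset.Icc 1 n, 0 < γ j)
    (hθ : 0 < θ) (hkp : 0 < kp) (hδ1 : 0 < δ1) (hδ2 : 0 < δ2)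
    (c : ℕ → ℝ)
    (hcdef : ∀ j, c j = (1 / (Nat.factorial j : ℝ)) *
        (∏ i ∈ Finset.range j, kk i) / (∏ i ∈ Finset.Icc 1 j, γ i))
    (r0 : ℝ) (hr0 : r0 = 1 + ∑ j ∈ Finset.Icc 1 n, c j)
    (x : ℕ → ℝ) (y1 y2 z : ℝ) :
    ((∀ j < n, 0 ≤ x j) ∧ 0 ≤ y1 ∧ 0 ≤ y2 ∧ 0 ≤ z ∧
      (0 = γ 1 * x 1 - kk 0 * x 0 * y2) ∧
      (∀ j, 1 ≤ j → j ≤ n - 2 →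
        0 = kk (j - 1) * x (j - 1) * y2 + ((j : ℝ) + 1) * γ (j + 1) * x (j + 1)
            - (kk j * y2 + (j : ℝ) * γ j) * x j) ∧
      (0 = kk (n - 2) * x (n - 2) * y2
            + (n : ℝ) * γ n * (1 - ∑ j ∈ Finset.range n, x j)
            - (kk (n - 1) * y2 + ((n : ℝ) - 1) * γ (n - 1)) * x (n - 1)) ∧
      (0 = kp * (y2 - y1 ^ 2) + δ1 * (z - y1)) ∧
      (0 = θ * (-(∑ j ∈ Finset.range n, kk j * x j * y2)
            + (∑ j ∈ Finset.Icc 1 (n - 1), (j : ℝ) * γ j * x j)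
            + (n : ℝ) * γ n * (1 - ∑ j ∈ Finset.range n, x j)) - y2 + y1 ^ 2) ∧
      (0 = δ2 * (r0 * x 0 - z)))
    ↔ ((∀ j < n, x j = c j / r0) ∧ y1 = 1 ∧ y2 = 1 ∧ z = 1) := by
  obtain ⟨m, rfl⟩ : ∃ m, n = m + 2 := ⟨n - 2, by omega⟩
  have hIcc : ∀ (N : ℕ) (f : ℕ → ℝ),
      ∑ j ∈ Finset.Icc 1 N, f j = ∑ i ∈ Finset.range N, f (i + 1) := by
    intro N f
    rw [← Finset.Ico_add_one_right_eq_Icc, Finset.sum_Ico_eq_sum_range]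
    exact Finset.sum_congr rfl (fun i _ => by rw [Nat.add_comm])
  -- basic facts about c
  have cpos : ∀ j ≤ m + 2, 0 < c j := by
    intro j hj
    rw [hcdef]
    have h1 : (0:ℝ) < (Nat.factorial j : ℝ) := by
      exact_mod_cast Nat.factorial_pos j
    have h2 : 0 < ∏ i ∈ Finset.range j, kk i :=
      Finset.prod_pos (fun i hi => hkk i (by simp at hi; omega))
    have h3 : 0 < ∏ i ∈ Finset.Icc 1 j, γ i :=
      Finset.prod_pos (fun i hi => hγ i (by simp at hi ⊢; omega))
    positivity
  have c0 : c 0 = 1 := by simp [hcdef]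
  have crec : ∀ j < m + 2, ((j:ℝ) + 1) * γ (j+1) * c (j+1) = kk j * c j := by
    intro j hj
    have hγj : γ (j+1) ≠ 0 := ne_of_gt (hγ (j+1) (by simp; omega))
    have hγp : (∏ i ∈ Finset.Icc 1 j, γ i) ≠ 0 :=
      ne_of_gt (Finset.prod_pos (fun i hi => hγ i (by simp at hi ⊢; omega)))
    have hfj : ((Nat.factorial j : ℝ)) ≠ 0 := by
      exact_mod_cast (Nat.factorial_pos j).ne'
    rw [hcdef, hcdef, Finset.prod_range_succ,
      Finset.prod_Icc_succ_top (by omega : 1 ≤ j + 1), Nat.factorial_succ]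
    push_cast
    field_simp
  have hr0' : r0 = ∑ j ∈ Finset.range (m+3), c j := by
    rw [hr0, hIcc (m+2) c, Finset.sum_range_succ' c]
    rw [c0, add_comm]
  have hr0pos : 0 < r0 := by
    rw [hr0']
    exact Finset.sum_pos (fun j hj => cpos j (by simp at hj; omega)) (by simp)
  have hr0ne : r0 ≠ 0 := ne_of_gt hr0pos
  -- the telescoping sum lemma (shared by both directions)
  have Tzero : (∀ j ≤ m, ((j:ℝ) + 1) * γ (j+1) * x (j+1) = kk j * x j * y2) →
      (((m:ℝ)+2) * γ (m+2) * (1 - ∑ j ∈ Finset.range (m+2), x j)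
        = kk (m+1) * x (m+1) * y2) →
      (-(∑ j ∈ Finset.range (m+2), kk j * x j * y2)
        + (∑ j ∈ Finset.Icc 1 (m+1), (j : ℝ) * γ j * x j)
        + ((m:ℝ)+2) * γ (m+2) * (1 - ∑ j ∈ Finset.range (m+2), x j)) = 0 := by
    intro P PL
    have h1 : (∑ j ∈ Finset.Icc 1 (m+1), (j : ℝ) * γ j * x j)
        = ∑ i ∈ Finset.range (m+1), kk i * x i * y2 := by
      rw [hIcc (m+1) (fun j => (j:ℝ) * γ j * x j)]
      refine Finset.sum_congr rfl (fun i hi => ?_)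
      have h := P i (by simp at hi; omega)
      push_cast
      linarith [h]
    rw [h1, PL, Finset.sum_range_succ]
    ring
  constructor
  · rintro ⟨hxnn, hy1, hy2, hz, E0, EC, EL, EY, ET, EZ⟩
    simp only [show m + 2 - 2 = m from rfl, show m + 2 - 1 = m + 1 from rfl] at EC EL ET
    -- chain relations
    have P : ∀ j ≤ m, ((j:ℝ) + 1) * γ (j+1) * x (j+1) = kk j * x j * y2 := by
      intro j hj
      induction j with
      | zero => push_cast; linarith [E0]
      | succ i ih =>
        have h1 := ih (by omega)
        have h2 := EC (i+1) (by omega) (by omega)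
        simp only [Nat.add_sub_cancel] at h2
        push_cast at h1 h2 ⊢
        linear_combination h1 - h2
    have PL : ((m:ℝ)+2) * γ (m+2) * (1 - ∑ j ∈ Finset.range (m+2), x j)
        = kk (m+1) * x (m+1) * y2 := by
      have h1 := P m le_rfl
      push_cast at EL h1 ⊢
      linear_combination h1 - EL
    -- x formula
    have X : ∀ j ≤ m + 1, x j = c j * y2 ^ j * x 0 := by
      intro j hj
      induction j with
      | zero => simp [c0]
      | succ i ih =>
        have h1 := P i (by omega)
        have h2 := crec i (by omega)
        have hi' := ih (by omega)
        have hne : ((i:ℝ) + 1) * γ (i+1) ≠ 0 := by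
          have := hγ (i+1) (by simp; omega)
          positivity
        refine mul_left_cancel₀ hne ?_
        push_cast
        linear_combination h1 + kk i * y2 * hi' - y2 ^ (i+1) * x 0 * h2
    have XN : 1 - ∑ j ∈ Finset.range (m+2), x j = c (m+2) * y2 ^ (m+2) * x 0 := by
      have h2 := crec (m+1) (by omega)
      have hx1 := X (m+1) le_rfl
      have hne : ((m:ℝ) + 2) * γ (m+2) ≠ 0 := by
        have := hγ (m+2) (by simp)
        positivity
      refine mul_left_cancel₀ hne ?_
      push_cast at h2 ⊢
      linear_combination PL + kk (m+1) * y2 * hx1 - y2 ^ (m+2) * x 0 * h2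
    have hsum : x 0 * (∑ j ∈ Finset.range (m+3), c j * y2 ^ j) = 1 := by
      have h1 : ∑ j ∈ Finset.range (m+2), x j
          = ∑ j ∈ Finset.range (m+2), c j * y2 ^ j * x 0 :=
        Finset.sum_congr rfl (fun j hj => X j (by simp at hj; omega))
      have h3 : ∑ j ∈ Finset.range (m+2), c j * y2 ^ j * x 0
          = (∑ j ∈ Finset.range (m+2), c j * y2 ^ j) * x 0 :=
        (Finset.sum_mul _ _ _).symm
      rw [Finset.sum_range_succ, mul_add]
      linear_combination -h1 - h3 - XN
    -- use ET to get y2 = y1^2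
    have hTz := Tzero P PL
    have hy21 : y2 = y1 ^ 2 := by
      push_cast at ET
      linear_combination ET + θ * hTz
    have hzx : z = r0 * x 0 := by
      rcases mul_eq_zero.mp (by linarith : δ2 * (r0 * x 0 - z) = 0) with h | h
      · exact absurd h (ne_of_gt hδ2)
      · linarith
    have hzy : z = y1 := by
      rw [hy21] at EY
      rcases mul_eq_zero.mp (by linarith : δ1 * (z - y1) = 0) with h | h
      · exact absurd h (ne_of_gt hδ1)
      · linarith
    have key : ∑ j ∈ Finset.range (m+3), c j * y1 ^ (2*j+1)
        = ∑ j ∈ Finset.range (m+3), c j := by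
      have e1 : ∀ j : ℕ, c j * y1 ^ (2*j+1) = y1 * (c j * (y1^2) ^ j) := by
        intro j; rw [pow_add, pow_mul]; ring
      rw [Finset.sum_congr rfl (fun j _ => e1 j), ← Finset.mul_sum, ← hy21]
      have hy1v : y1 = r0 * x 0 := by rw [← hzy, hzx]
      rw [hy1v, ← hr0', mul_assoc, hsum, mul_one]
    have hy1eq : y1 = 1 := by
      rcases lt_trichotomy y1 1 with h | h | h
      · exfalso
        have hlt : ∑ j ∈ Finset.range (m+3), c j * y1 ^ (2*j+1)
            < ∑ j ∈ Finset.range (m+3), c j := by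
          refine Finset.sum_lt_sum_of_nonempty (by simp) (fun j hj => ?_)
          have hc := cpos j (by simp at hj; omega)
          have hp : y1 ^ (2*j+1) < 1 := pow_lt_one₀ hy1 h (by omega)
          calc c j * y1 ^ (2*j+1) < c j * 1 := by
                exact (mul_lt_mul_iff_right₀ hc).mpr hp
            _ = c j := mul_one _
        linarith [key]
      · exact h
      · exfalso
        have hlt : ∑ j ∈ Finset.range (m+3), c j
            < ∑ j ∈ Finset.range (m+3), c j * y1 ^ (2*j+1) := by
          refine Finset.sum_lt_sum_of_nonempty (by simp) (fun j hj => ?_)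
          have hc := cpos j (by simp at hj; omega)
          have hp : 1 < y1 ^ (2*j+1) := one_lt_pow₀ h (by omega)
          calc c j = c j * 1 := (mul_one _).symm
            _ < c j * y1 ^ (2*j+1) := (mul_lt_mul_iff_right₀ hc).mpr hp
        linarith [key]
    have hy2eq : y2 = 1 := by rw [hy21, hy1eq]; ring
    have hzeq : z = 1 := by rw [hzy, hy1eq]
    have hx0 : x 0 = 1 / r0 := by
      rw [hy2eq] at hsum
      simp only [one_pow, mul_one] at hsum
      rw [← hr0'] at hsum
      rw [eq_div_iff hr0ne]
      linarith [hsum]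
    refine ⟨fun j hj => ?_, hy1eq, hy2eq, hzeq⟩
    rw [X j (by omega), hy2eq, hx0, one_pow]
    ring
  · rintro ⟨hx, hy1e, hy2e, hze⟩
    subst hy1e; subst hy2e; subst hze
    have P : ∀ j ≤ m, ((j:ℝ) + 1) * γ (j+1) * x (j+1) = kk j * x j * 1 := by
      intro j hj
      rw [hx (j+1) (by omega), hx j (by omega)]
      have h := crec j (by omega)
      linear_combination h / r0
    have hsumx : ∑ j ∈ Finset.range (m+2), x j = 1 - c (m+2) / r0 := by
      have h1 : ∑ j ∈ Finset.range (m+2), x j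
          = (∑ j ∈ Finset.range (m+2), c j) / r0 := by
        rw [Finset.sum_div]
        exact Finset.sum_congr rfl (fun j hj => hx j (by simp at hj; omega))
      have h2 : r0 = (∑ j ∈ Finset.range (m+2), c j) + c (m+2) := by
        rw [hr0', show m + 3 = (m+2) + 1 from rfl, Finset.sum_range_succ]
      rw [h1]
      field_simp
      linear_combination -h2
    have PL : ((m:ℝ)+2) * γ (m+2) * (1 - ∑ j ∈ Finset.range (m+2), x j)
        = kk (m+1) * x (m+1) * 1 := by
      rw [hsumx, hx (m+1) (by omega)]
      have h := crec (m+1) (by omega)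
      push_cast at h ⊢
      field_simp
      linear_combination h
    have hTz := Tzero P PL
    refine ⟨fun j hj => by
        rw [hx j hj]
        exact div_nonneg (le_of_lt (cpos j (by omega))) (le_of_lt hr0pos),
      by norm_num, by norm_num, by norm_num, ?_, ?_, ?_, ?_, ?_, ?_⟩
    · have h := P 0 (by omega)
      push_cast at h
      linarith [h]
    · intro j hj1 hj2
      obtain ⟨i, rfl⟩ : ∃ i, j = i + 1 := ⟨j - 1, by omega⟩
      simp only [Nat.add_sub_cancel]
      have h1 := P i (by omega)
      have h2 := P (i+1) (by omega)
      push_cast at h1 h2 ⊢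
      linear_combination h1 - h2
    · simp only [show m + 2 - 2 = m from rfl, show m + 2 - 1 = m + 1 from rfl]
      have h1 := P m le_rfl
      push_cast at PL h1 ⊢
      linear_combination h1 - PL
    · ring
    · simp only [show m + 2 - 1 = m + 1 from rfl]
      push_cast at hTz ⊢
      linear_combination -θ * hTz
    · rw [hx 0 (by omega), c0, mul_one_div, div_self hr0ne]
      ring
end

section
/- Let n ≥ 2, let k_0, …, k_{n−1} > 0, γ_1, …, γ_n > 0 and y_2 ≥ 0, and define ψ(y_2) = 1 / (1 + Σ_{j=1}^n (1/j!)·(k_0⋯k_{j−1})/(γ_1⋯γ_j)·y_2^j). Then the tuple x_0 = ψ(y_2), x_j = (1/j!)·(k_0⋯k_{j−1})/(γ_1⋯γ_j)·y_2^j·ψ(y_2) for 1 ≤ j ≤ n−1, is the unique solution of the linear system 0 = γ_1 x_1 − k_0 y_2 x_0; 0 = k_{j−1} y_2 x_{j−1} + (j+1)γ_{j+1} x_{j+1} − (k_j y_2 + jγ_j) x_j for 1 ≤ j ≤ n−2; 0 = k_{n−2} x_{n−2} y_2 + nγ_n(1 − Σ_{j=0}^{n−1} x_j) − (k_{n−1}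 y_2 + (n−1)γ_{n−1}) x_{n−1}. -/
/-- For a fixed dimer concentration `y₂ ≥ 0`, the quasi-stationary tuple
`x_0 = ψ(y₂)`, `x_j = c_j y₂^j ψ(y₂)` is the unique solution of the
linear binding-site system. -/
theorem stmt_3 (n : ℕ) (hn : 2 ≤ n) (kk γ : ℕ → ℝ)
    (hkk : ∀ j < n, 0 < kk j) (hγ : ∀ j ∈ Finset.Icc 1 n, 0 < γ j)
    (y2 : ℝ) (hy2 : 0 ≤ y2) (c : ℕ → ℝ)
    (hcdef : ∀ j, c j = (1 / (Nat.factorial j : ℝ)) *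
        (∏ i ∈ Finset.range j, kk i) / (∏ i ∈ Finset.Icc 1 j, γ i))
    (ψ : ℝ) (hψ : ψ = 1 / (1 + ∑ j ∈ Finset.Icc 1 n, c j * y2 ^ j))
    (x : ℕ → ℝ) :
    ((0 = γ 1 * x 1 - kk 0 * y2 * x 0) ∧
     (∀ j, 1 ≤ j → j ≤ n - 2 →
        0 = kk (j - 1) * y2 * x (j - 1) + ((j : ℝ) + 1) * γ (j + 1) * x (j + 1)
            - (kk j * y2 + (j : ℝ) * γ j) * x j) ∧
     (0 = kk (n - 2) * x (n - 2) * y2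
          + (n : ℝ) * γ n * (1 - ∑ j ∈ Finset.range n, x j)
          - (kk (n - 1) * y2 + ((n : ℝ) - 1) * γ (n - 1)) * x (n - 1)))
    ↔ (∀ j < n, x j = c j * y2 ^ j * ψ) := by
  obtain ⟨m, rfl⟩ : ∃ m, n = m + 2 := ⟨n - 2, by omega⟩
  have hc0 : c 0 = 1 := by simp [hcdef]
  have hγ' : ∀ j, 1 ≤ j → j ≤ m + 2 → 0 < γ j := fun j h1 h2 =>
    hγ j (Finset.mem_Icc.mpr ⟨h1, h2⟩)
  -- the key recursion for the coefficients c
  have key : ∀ j, j + 1 ≤ m + 2 → ((j : ℝ) + 1) * γ (j + 1) * c (j + 1) = kk j * c j := by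
    intro j hj
    have hg : γ (j + 1) ≠ 0 := ne_of_gt (hγ' (j + 1) (by omega) hj)
    have hfj : ((Nat.factorial j : ℝ)) ≠ 0 := by positivity
    rw [hcdef (j + 1), hcdef j, Finset.prod_range_succ,
      Finset.prod_Icc_succ_top (by omega : 1 ≤ j + 1), Nat.factorial_succ]
    have hQ : (∏ i ∈ Finset.Icc 1 j, γ i) ≠ 0 := by
      apply ne_of_gt
      exact Finset.prod_pos fun i hi => hγ i (by
        rw [Finset.mem_Icc] at hi ⊢; omega)
    push_cast
    have hj1 : ((j : ℝ) + 1) ≠ 0 := by positivity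
    field_simp
  -- positivity of coefficients
  have hcpos : ∀ j ≤ m + 2, 0 < c j := by
    intro j hj
    rw [hcdef]
    apply div_pos
    · apply mul_pos
      · positivity
      · exact Finset.prod_pos fun i hi => hkk i (by
          have := Finset.mem_range.mp hi; omega)
    · exact Finset.prod_pos fun i hi => hγ i (by
        rw [Finset.mem_Icc] at hi ⊢; omega)
  have hSnn : (0:ℝ) ≤ ∑ j ∈ Finset.Icc 1 (m + 2), c j * y2 ^ j := by
    apply Finset.sum_nonneg
    intro j hj
    have hj' := Finset.mem_Icc.mp hj
    have := hcpos j hj'.2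
    positivity
  have hden : (0:ℝ) < 1 + ∑ j ∈ Finset.Icc 1 (m + 2), c j * y2 ^ j := by linarith
  have hψ1 : ψ * (1 + ∑ j ∈ Finset.Icc 1 (m + 2), c j * y2 ^ j) = 1 := by
    rw [hψ]; field_simp
  -- the full sum over `range (m+3)` equals `1 + Icc sum`
  have hsum : (1:ℝ) + ∑ j ∈ Finset.Icc 1 (m + 2), c j * y2 ^ j
      = ∑ j ∈ Finset.range (m + 3), c j * y2 ^ j := by
    rw [Finset.sum_range_succ' (fun j => c j * y2 ^ j) (m + 2)]
    rw [← Finset.Ico_add_one_right_eq_Icc, Finset.sum_Ico_eq_sum_range]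
    simp only [Nat.add_sub_cancel, hc0, pow_zero, mul_one]
    rw [add_comm]
    congr 1
    apply Finset.sum_congr (by congr 1) (fun i _ => by rw [add_comm 1 i])
  constructor
  · rintro ⟨eq0, eqs, eqlast⟩
    -- fluxes vanish
    have hF : ∀ j ≤ m, ((j : ℝ) + 1) * γ (j + 1) * x (j + 1) = kk j * y2 * x j := by
      intro j
      induction j with
      | zero => intro _; push_cast; linarith [eq0]
      | succ i ih =>
        intro hj
        have ihh := ih (by omega)
        have h := eqs (i + 1) (by omega) (by omega)
        simp only [Nat.add_sub_cancel] at h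
        push_cast at h ⊢
        linarith
    -- x j in terms of x 0
    have hx : ∀ j ≤ m + 1, x j = c j * y2 ^ j * x 0 := by
      intro j
      induction j with
      | zero => intro _; simp [hc0]
      | succ i ih =>
        intro hj
        have ihh := ih (by omega)
        have hne : ((i : ℝ) + 1) * γ (i + 1) ≠ 0 := by
          have := hγ' (i + 1) (by omega) (by omega)
          positivity
        apply mul_left_cancel₀ hne
        calc ((i : ℝ) + 1) * γ (i + 1) * x (i + 1) = kk i * y2 * x i := hF i (by omega)
          _ = (kk i * c i) * y2 ^ (i + 1) * x 0 := by rw [ihh]; ring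
          _ = (((i : ℝ) + 1) * γ (i + 1) * c (i + 1)) * y2 ^ (i + 1) * x 0 := by
              rw [key i (by omega)]
          _ = ((i : ℝ) + 1) * γ (i + 1) * (c (i + 1) * y2 ^ (i + 1) * x 0) := by ring
    -- the last equation
    have hidx2 : m + 2 - 2 = m := by omega
    have hidx1 : m + 2 - 1 = m + 1 := by omega
    rw [hidx2, hidx1] at eqlast
    have hFm : ((m : ℝ) + 1) * γ (m + 1) * x (m + 1) = kk m * y2 * x m := hF m le_rfl
    push_cast at eqlast
    -- derive (m+2) γ(m+2) (1 - Σ) = kk (m+1) y2 x (m+1)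
    have h1 : ((m : ℝ) + 2) * γ (m + 2) * (1 - ∑ j ∈ Finset.range (m + 2), x j)
        = kk (m + 1) * y2 * x (m + 1) := by linarith
    have hne2 : ((m : ℝ) + 2) * γ (m + 2) ≠ 0 := by
      have := hγ' (m + 2) (by omega) le_rfl
      positivity
    have h2 : (1 : ℝ) - ∑ j ∈ Finset.range (m + 2), x j = c (m + 2) * y2 ^ (m + 2) * x 0 := by
      apply mul_left_cancel₀ hne2
      have hk := key (m + 1) le_rfl
      push_cast at hk
      rw [hx (m + 1) le_rfl] at h1
      linear_combination h1 - (y2 ^ (m + 2) * x 0) * hk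
    have hsx : ∑ j ∈ Finset.range (m + 2), x j
        = (∑ j ∈ Finset.range (m + 2), c j * y2 ^ j) * x 0 := by
      rw [Finset.sum_mul]
      apply Finset.sum_congr rfl
      intro j hj
      exact hx j (by have := Finset.mem_range.mp hj; omega)
    have h3 : (1:ℝ) = (∑ j ∈ Finset.range (m + 3), c j * y2 ^ j) * x 0 := by
      rw [Finset.sum_range_succ, add_mul]
      rw [hsx] at h2
      linarith
    rw [← hsum] at h3
    have hx0 : x 0 = ψ := by
      have hne : (1:ℝ) + ∑ j ∈ Finset.Icc 1 (m + 2), c j * y2 ^ j ≠ 0 := ne_of_gt hden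
      rw [hψ, eq_div_iff hne]
      linarith [h3]
    intro j hj
    rw [hx j (by omega), hx0]
  · intro hx
    have hx0 : x 0 = ψ := by
      have := hx 0 (by omega)
      simpa [hc0] using this
    have hSx : (1:ℝ) - ∑ j ∈ Finset.range (m + 2), x j = c (m + 2) * y2 ^ (m + 2) * ψ := by
      have hsx : ∑ j ∈ Finset.range (m + 2), x j
          = (∑ j ∈ Finset.range (m + 2), c j * y2 ^ j) * ψ := by
        rw [Finset.sum_mul]
        apply Finset.sum_congr rfl
        intro j hj
        exact hx j (Finset.mem_range.mp hj)
      rw [hsx]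
      have := hψ1
      rw [hsum] at this
      rw [Finset.sum_range_succ] at this
      linear_combination -this
    refine ⟨?_, ?_, ?_⟩
    · rw [hx 1 (by omega), hx0]
      have hk := key 0 (by omega)
      push_cast at hk
      linear_combination (-(y2 * ψ)) * hk - (y2 * ψ * kk 0) * hc0
    · intro j h1 h2
      obtain ⟨i, rfl⟩ : ∃ i, j = i + 1 := ⟨j - 1, by omega⟩
      have h2' : i + 1 ≤ m := by omega
      simp only [Nat.add_sub_cancel]
      rw [hx i (by omega), hx (i + 1) (by omega), hx (i + 2) (by omega)]
      have hk1 := key i (by omega)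
      have hk2 := key (i + 1) (by omega)
      push_cast at hk1 hk2 ⊢
      linear_combination (y2 ^ (i + 1) * ψ) * hk1 - (y2 ^ (i + 2) * ψ) * hk2
    · have hidx2 : m + 2 - 2 = m := by omega
      have hidx1 : m + 2 - 1 = m + 1 := by omega
      rw [hidx2, hidx1, hx m (by omega), hx (m + 1) (by omega), hSx]
      have hk1 := key m (by omega)
      have hk2 := key (m + 1) le_rfl
      push_cast at hk1 hk2 ⊢
      linear_combination (y2 ^ (m + 1) * ψ) * hk1 - (y2 ^ (m + 2) * ψ) * hk2
end

section
/- Let n ≥ 1, let k_0, …, k_{n−1} > 0, γ_1, …, γ_n > 0, y_2 > 0, set γ̃_j = jγ_j for 1 ≤ j ≤ n, γ̃_0 = 0 and k_n = 0, and define α_j = −k_{j−1} y_2 − γ̃_{j−1} for 1 ≤ j ≤ n+1 and β_j² = k_{j−1} γ̃_j y_2 for 1 ≤ j ≤ n. Define the sequence Δ_0 = 1, Δ_1 = α_1, and Δ_j = α_j Δ_{j−1} − β_{j−1}² Δ_{j−2} for 2 ≤ j ≤ n+1. Then Δ_j = (−1)^j k_0⋯k_{j−1} y_2^j for 1 ≤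 j ≤ n, and Δ_{n+1} = 0. -/
/-- The Sturm sequence `Δ_j` (values at `λ = 0` of leading principal minors of
the symmetric tridiagonal matrix `P`) satisfies
`Δ_j = (−1)^j k_0 ⋯ k_{j−1} y₂^j` for `1 ≤ j ≤ n`, and `Δ_{n+1} = 0`. -/
theorem stmt_6 (n : ℕ) (hn : 1 ≤ n) (kk γ : ℕ → ℝ)
    (hkk : ∀ j < n, 0 < kk j) (hkn : kk n = 0)
    (hγ : ∀ j ∈ Finset.Icc 1 n, 0 < γ j)
    (tγ : ℕ → ℝ) (htγ : ∀ j, tγ j = (j : ℝ) * γ j)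
    (y2 : ℝ) (hy2 : 0 < y2)
    (α : ℕ → ℝ) (hα : ∀ j, 1 ≤ j → j ≤ n + 1 → α j = -(kk (j - 1) * y2 + tγ (j - 1)))
    (β2 : ℕ → ℝ) (hβ : ∀ j, 1 ≤ j → j ≤ n → β2 j = kk (j - 1) * tγ j * y2)
    (Δ : ℕ → ℝ) (hΔ0 : Δ 0 = 1) (hΔ1 : Δ 1 = α 1)
    (hΔ : ∀ j, 2 ≤ j → j ≤ n + 1 → Δ j = α j * Δ (j - 1) - β2 (j - 1) * Δ (j - 2)) :
    (∀ j, 1 ≤ j → j ≤ n →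
        Δ j = (-1 : ℝ) ^ j * (∏ i ∈ Finset.range j, kk i) * y2 ^ j)
    ∧ Δ (n + 1) = 0 := by
  have key : ∀ j, 1 ≤ j → j ≤ n →
      Δ j = (-1 : ℝ) ^ j * (∏ i ∈ Finset.range j, kk i) * y2 ^ j := by
    intro j
    induction j using Nat.strong_induction_on with
    | _ j ih =>
      intro h1 h2
      match j, h1, h2 with
      | 1, _, _ =>
        rw [hΔ1, hα 1 (by omega) (by omega)]
        simp [htγ]
      | (m+2), _, h2 =>
        have hΔm : Δ m = (-1 : ℝ) ^ m * (∏ i ∈ Finset.range m, kk i) * y2 ^ m := by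
          rcases Nat.eq_zero_or_pos m with rfl | hm
          · simp [hΔ0]
          · exact ih m (by omega) hm (by omega)
        have hΔm1 := ih (m+1) (by omega) (by omega) (by omega)
        rw [hΔ (m+2) (by omega) (by omega)]
        simp only [show m + 2 - 1 = m + 1 from rfl, show m + 2 - 2 = m from rfl, show m + 1 - 1 = m from rfl]
        rw [hα (m+2) (by omega) (by omega), hβ (m+1) (by omega) (by omega)]
        simp only [show m + 2 - 1 = m + 1 from rfl, show m + 2 - 2 = m from rfl, show m + 1 - 1 = m from rfl]
        rw [hΔm1, hΔm, Finset.prod_range_succ, Finset.prod_range_succ, Finset.prod_range_succ]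
        ring
  refine ⟨key, ?_⟩
  obtain ⟨m, rfl⟩ : ∃ m, n = m + 1 := ⟨n - 1, by omega⟩
  have hΔm : Δ m = (-1 : ℝ) ^ m * (∏ i ∈ Finset.range m, kk i) * y2 ^ m := by
    rcases Nat.eq_zero_or_pos m with rfl | hm
    · simp [hΔ0]
    · exact key m hm (by omega)
  have hΔm1 := key (m+1) (by omega) (le_refl _)
  rw [hΔ (m+2) (by omega) (le_refl _)]
  simp only [show m + 2 - 1 = m + 1 from rfl, show m + 2 - 2 = m from rfl, show m + 1 - 1 = m from rfl]
  rw [hα (m+2) (by omega) (le_refl _), hβ (m+1) (by omega) (le_refl _)]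
  simp only [show m + 2 - 1 = m + 1 from rfl, show m + 2 - 2 = m from rfl, show m + 1 - 1 = m from rfl]
  rw [hΔm1, hΔm, Finset.prod_range_succ, hkn]
  ring
end

section
/- Let n ≥ 1, let k_0, …, k_{n−1} > 0, γ_1, …, γ_n > 0, y_2 > 0, set γ̃_j = jγ_j for 1 ≤ j ≤ n, γ̃_0 = 0 and k_n = 0, and let A be the (n+1)×(n+1) real tridiagonal matrix with diagonal entries A_{j,j} = −k_{j−1} y_2 − γ̃_{j−1} (1 ≤ j ≤ n+1), subdiagonal entries A_{j+1,j} = k_{j−1} y_2 and superdiagonal entries A_{j,j+1} = γ̃_j (1 ≤ j ≤ n). Then all eigenvalues of A are real and simple (every root of the characteristic polynomial of A over ℂ is a real number and has multiplicity one), 0 is an eigenvalue of A, and every eigenvalue λ of A satisfies λ ≤ 0. -/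
open Polynomial Matrix

lemma charpoly_similar_aux {m R : Type*} [DecidableEq m] [Fintype m] [CommRing R]
    (P M Q : Matrix m m R) (h1 : P * Q = 1) :
    (P * M * Q).charpoly = M.charpoly := by
  have hmapPQ : (P.map (C : R → R[X])) * (Q.map C) = 1 := by
    rw [← Matrix.map_mul (f := (C : R →+* R[X])), h1]; simp
  have hc : charmatrix (P * M * Q) = P.map C * charmatrix M * Q.map C := by
    unfold charmatrix
    rw [mul_sub, sub_mul]
    congr 1
    · rw [← Matrix.scalar_commute X (fun r => Commute.all _ _) (P.map C), mul_assoc, hmapPQ,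
        mul_one]
    · simp only [RingHom.mapMatrix_apply]
      rw [← Matrix.map_mul (f := (C : R →+* R[X])), ← Matrix.map_mul (f := (C : R →+* R[X]))]
  have hdet : (P.map (C : R → R[X])).det * (Q.map C).det = 1 := by
    rw [← det_mul, hmapPQ, det_one]
  rw [Matrix.charpoly, Matrix.charpoly, hc, det_mul, det_mul]
  rw [mul_right_comm, hdet, one_mul]

lemma charpoly_hermitian_real {N : ℕ} (S : Matrix (Fin N) (Fin N) ℝ) (hS : S.IsHermitian) :
    S.charpoly = ∏ k, (X - C (hS.eigenvalues k)) := by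
  have h1 : (hS.eigenvectorUnitary : Matrix (Fin N) (Fin N) ℝ)
      * star (hS.eigenvectorUnitary : Matrix (Fin N) (Fin N) ℝ) = 1 :=
    Matrix.mem_unitaryGroup_iff.mp hS.eigenvectorUnitary.2
  conv_lhs => rw [hS.spectral_theorem, Unitary.conjStarAlgAut_apply]
  rw [charpoly_similar_aux _ _ _ h1,
    Matrix.charpoly_of_upperTriangular _ (Matrix.blockTriangular_diagonal _)]
  simp [RCLike.ofReal_real_eq_id]

lemma rootMultiplicity_prod_X_sub_C {N : ℕ} (c : Fin N → ℂ) (hinj : Function.Injective c)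
    (k0 : Fin N) :
    Polynomial.rootMultiplicity (c k0) (∏ k, (X - C (c k))) = 1 := by
  classical
  rw [← Polynomial.count_roots]
  have : (∏ k, (X - C (c k))) = ((Finset.univ.val.map c).map (fun a => X - C a)).prod := by
    rw [Multiset.map_map]; rfl
  rw [this, Polynomial.roots_multiset_prod_X_sub_C,
    Multiset.count_map_eq_count' c _ hinj,
    Multiset.count_eq_one_of_mem Finset.univ.nodup (Finset.mem_univ _)]

/-- The tridiagonal occupancy matrix `A` has only real simple eigenvalues,
`0` is an eigenvalue, and all eigenvalues are `≤ 0`. -/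
theorem stmt_7 (n : ℕ) (hn : 1 ≤ n) (kk γ : ℕ → ℝ)
    (hkk : ∀ j < n, 0 < kk j) (hkn : kk n = 0)
    (hγ : ∀ j ∈ Finset.Icc 1 n, 0 < γ j)
    (tγ : ℕ → ℝ) (htγ : ∀ j, tγ j = (j : ℝ) * γ j)
    (y2 : ℝ) (hy2 : 0 < y2)
    (A : Matrix (Fin (n + 1)) (Fin (n + 1)) ℝ)
    (hA : ∀ i l : Fin (n + 1), A i l =
      if (i : ℕ) = (l : ℕ) then -(kk (i : ℕ) * y2 + tγ (i : ℕ))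
      else if (l : ℕ) = (i : ℕ) + 1 then tγ (l : ℕ)
      else if (i : ℕ) = (l : ℕ) + 1 then kk (l : ℕ) * y2
      else 0) :
    (∀ μ : ℂ, (Matrix.charpoly (A.map (fun t : ℝ => (t : ℂ)))).IsRoot μ →
        μ.im = 0 ∧ μ.re ≤ 0 ∧
        Polynomial.rootMultiplicity μ (Matrix.charpoly (A.map (fun t : ℝ => (t : ℂ)))) = 1)
    ∧ (Matrix.charpoly A).IsRoot 0 := by
  classical
  -- basic positivity facts
  have htγ0 : tγ 0 = 0 := by rw [htγ]; simp
  have htγpos : ∀ j, 1 ≤ j → j ≤ n → 0 < tγ j := by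
    intro j h1 h2
    rw [htγ]
    exact mul_pos (by exact_mod_cast Nat.pos_of_ne_zero (by omega)) (hγ j (Finset.mem_Icc.mpr ⟨h1, h2⟩))
  have hkky : ∀ i, i ≤ n → 0 ≤ kk i * y2 := by
    intro i hi
    rcases hi.lt_or_eq with h | h
    · exact (mul_pos (hkk i h) hy2).le
    · rw [h, hkn]; simp
  have htγnn : ∀ j, j ≤ n → 0 ≤ tγ j := by
    intro j hj
    rcases Nat.eq_zero_or_pos j with h | h
    · rw [h, htγ0]
    · exact (htγpos j h hj).le
  set a : ℕ → ℝ := fun i => Real.sqrt (kk i * y2) with ha_def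
  set b : ℕ → ℝ := fun j => Real.sqrt (tγ j) with hb_def
  have ha2 : ∀ i, i ≤ n → a i * a i = kk i * y2 := fun i hi => Real.mul_self_sqrt (hkky i hi)
  have hb2 : ∀ j, j ≤ n → b j * b j = tγ j := fun j hj => Real.mul_self_sqrt (htγnn j hj)
  have ha_pos : ∀ i, i < n → 0 < a i :=
    fun i hi => Real.sqrt_pos.mpr (mul_pos (hkk i hi) hy2)
  have hb_pos : ∀ j, 1 ≤ j → j ≤ n → 0 < b j :=
    fun j h1 h2 => Real.sqrt_pos.mpr (htγpos j h1 h2)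
  have han : a n = 0 := by rw [ha_def]; simp [hkn]
  have hbz : b 0 = 0 := by rw [hb_def]; simp [htγ0]
  -- the diagonal conjugation weights
  set d : ℕ → ℝ := fun m =>
    Nat.rec (1 : ℝ) (fun i di => if i < n then di * b (i + 1) / a i else di) m with hd_def
  have hds : ∀ i, i < n → d (i + 1) = d i * b (i + 1) / a i := by
    intro i h
    show (if i < n then d i * b (i + 1) / a i else d i) = _
    rw [if_pos h]
  have hd_pos : ∀ m, 0 < d m := by
    intro m
    induction m with
    | zero => norm_num [hd_def]
    | succ i ih =>
      show (0:ℝ) < (if i < n then d i * b (i + 1) / a i else d i)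
      split_ifs with h
      · exact div_pos (mul_pos ih (hb_pos (i+1) (by omega) (by omega))) (ha_pos i h)
      · exact ih
  -- the symmetrized matrix
  set S : Matrix (Fin (n+1)) (Fin (n+1)) ℝ :=
    Matrix.of fun j l => d (j : ℕ) * A j l * (d (l : ℕ))⁻¹ with hS_def
  have hS : ∀ j l : Fin (n+1), S j l =
      if (j:ℕ) = (l:ℕ) then -(kk (j:ℕ) * y2 + tγ (j:ℕ))
      else if (l:ℕ) = (j:ℕ)+1 then a (j:ℕ) * b (l:ℕ)
      else if (j:ℕ) = (l:ℕ)+1 then a (l:ℕ) * b (j:ℕ)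
      else 0 := by
    intro j l
    have hj := j.isLt
    have hl := l.isLt
    show d (j:ℕ) * A j l * (d (l:ℕ))⁻¹ = _
    rw [hA]
    by_cases h1 : (j:ℕ) = (l:ℕ)
    · rw [if_pos h1, if_pos h1, h1]
      have hdl := hd_pos (l:ℕ)
      field_simp
    · rw [if_neg h1, if_neg h1]
      by_cases h2 : (l:ℕ) = (j:ℕ) + 1
      · rw [if_pos h2, if_pos h2]
        have hjn : (j:ℕ) < n := by omega
        have hbl : 0 < b (l:ℕ) := hb_pos _ (by omega) (by omega)
        have haj := ha_pos _ hjn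
        have hdj := hd_pos (j:ℕ)
        rw [show d (l:ℕ) = d (j:ℕ) * b (l:ℕ) / a (j:ℕ) by
          rw [h2]; exact hds _ hjn]
        rw [← hb2 (l:ℕ) (by omega)]
        field_simp
      · rw [if_neg h2, if_neg h2]
        by_cases h3 : (j:ℕ) = (l:ℕ) + 1
        · rw [if_pos h3, if_pos h3]
          have hln : (l:ℕ) < n := by omega
          have hbj : 0 < b (j:ℕ) := hb_pos _ (by omega) (by omega)
          have hal := ha_pos _ hln
          have hdl := hd_pos (l:ℕ)
          rw [show d (j:ℕ) = d (l:ℕ) * b (j:ℕ) / a (l:ℕ) by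
            rw [h3]; exact hds _ hln]
          rw [← ha2 (l:ℕ) (by omega)]
          field_simp
        · rw [if_neg h3, if_neg h3, mul_zero, zero_mul]
  -- A is similar to S
  have hA_eq : A = Matrix.diagonal (fun i : Fin (n+1) => (d (i:ℕ))⁻¹) * S
      * Matrix.diagonal (fun i : Fin (n+1) => d (i:ℕ)) := by
    ext j l
    rw [Matrix.mul_diagonal, Matrix.diagonal_mul]
    show A j l = (d (j:ℕ))⁻¹ * (d (j:ℕ) * A j l * (d (l:ℕ))⁻¹) * d (l:ℕ)
    field_simp
    rw [eq_div_iff (mul_pos (hd_pos (j:ℕ)) (hd_pos (l:ℕ))).ne']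
    ring
  have hcpS : A.charpoly = S.charpoly := by
    rw [hA_eq]
    apply charpoly_similar_aux
    rw [Matrix.diagonal_mul_diagonal]
    rw [show (fun i : Fin (n+1) => (d (i:ℕ))⁻¹ * d (i:ℕ)) = fun _ => (1:ℝ) from
      funext fun i => inv_mul_cancel₀ (hd_pos (i:ℕ)).ne', Matrix.diagonal_one]
  -- S is negative semidefinite via S = -(Tᵀ * T)
  set T : Matrix (Fin n) (Fin (n+1)) ℝ :=
    Matrix.of fun i j => if (j:ℕ) = (i:ℕ) then a (i:ℕ)
      else if (j:ℕ) = (i:ℕ) + 1 then -(b ((i:ℕ)+1)) else 0 with hT_def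
  have hST : S = -(Tᵀ * T) := by
    ext j l
    have hj := j.isLt
    have hl := l.isLt
    rw [Matrix.neg_apply, Matrix.mul_apply, hS]
    simp only [Matrix.transpose_apply]
    have hsum : ∑ i : Fin n, T i j * T i l =
        ∑ m ∈ Finset.range n,
          ((if (j:ℕ) = m then a m else if (j:ℕ) = m + 1 then -(b (m+1)) else 0) *
           (if (l:ℕ) = m then a m else if (l:ℕ) = m + 1 then -(b (m+1)) else 0)) :=
      Fin.sum_univ_eq_sum_range (fun m =>
        (if (j:ℕ) = m then a m else if (j:ℕ) = m + 1 then -(b (m+1)) else 0) *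
        (if (l:ℕ) = m then a m else if (l:ℕ) = m + 1 then -(b (m+1)) else 0)) n
    rw [hsum]
    by_cases h1 : (j:ℕ) = (l:ℕ)
    · obtain rfl : j = l := Fin.val_injective h1
      rw [if_pos rfl]
      have hpt : ∀ m ∈ Finset.range n,
          ((if (j:ℕ) = m then a m else if (j:ℕ) = m + 1 then -(b (m+1)) else 0) *
           (if (j:ℕ) = m then a m else if (j:ℕ) = m + 1 then -(b (m+1)) else 0)) =
          (if m = (j:ℕ) then a m * a m else 0)
            + (if m + 1 = (j:ℕ) then b (m+1) * b (m+1) else 0) := by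
        intro m _
        split_ifs <;> first | ring1 | omega
      rw [Finset.sum_congr rfl hpt, Finset.sum_add_distrib,
        Finset.sum_ite_eq' (Finset.range n) ((j:ℕ)) (fun m => a m * a m)]
      have hsecond : (∑ m ∈ Finset.range n, (if m + 1 = (j:ℕ) then b (m+1) * b (m+1) else 0))
          = if (j:ℕ) = 0 then 0 else b (j:ℕ) * b (j:ℕ) := by
        by_cases hj1 : (j:ℕ) = 0
        · rw [if_pos hj1]
          apply Finset.sum_eq_zero
          intro m _
          rw [if_neg (by omega)]
        · rw [if_neg hj1,
            Finset.sum_congr rfl (fun m _ =>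
              show (if m + 1 = (j:ℕ) then b (m+1) * b (m+1) else 0)
                  = (if m = (j:ℕ) - 1 then b (m+1) * b (m+1) else 0) by
                by_cases h : m + 1 = (j:ℕ)
                · rw [if_pos h, if_pos (by omega)]
                · rw [if_neg h, if_neg (by omega)]),
            Finset.sum_ite_eq' (Finset.range n) ((j:ℕ) - 1) (fun m => b (m+1) * b (m+1)),
            if_pos (Finset.mem_range.mpr (by omega)), show (j:ℕ) - 1 + 1 = (j:ℕ) by omega]
      rw [hsecond]
      by_cases hjn : (j:ℕ) < n
      · rw [if_pos (Finset.mem_range.mpr hjn), ha2 _ (by omega)]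
        by_cases hj0 : (j:ℕ) = 0
        · rw [if_pos hj0, hj0, htγ0]
        · rw [if_neg hj0, hb2 _ (by omega)]
      · have hjeq : (j:ℕ) = n := by omega
        rw [if_neg (by simp [hjeq]), if_neg (by omega), hb2 _ (by omega), hjeq, hkn]
        ring
    · rw [if_neg h1]
      by_cases h2 : (l:ℕ) = (j:ℕ) + 1
      · rw [if_pos h2]
        have hpt : ∀ m ∈ Finset.range n,
            ((if (j:ℕ) = m then a m else if (j:ℕ) = m + 1 then -(b (m+1)) else 0) *
             (if (l:ℕ) = m then a m else if (l:ℕ) = m + 1 then -(b (m+1)) else 0)) =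
            (if m = (j:ℕ) then -(a m * b (m+1)) else 0) := by
          intro m _
          split_ifs <;> first | ring1 | omega
        rw [Finset.sum_congr rfl hpt,
          Finset.sum_ite_eq' (Finset.range n) ((j:ℕ)) (fun m => -(a m * b (m+1))),
          if_pos (Finset.mem_range.mpr (by omega)), ← h2]
        ring
      · rw [if_neg h2]
        by_cases h3 : (j:ℕ) = (l:ℕ) + 1
        · rw [if_pos h3]
          have hpt : ∀ m ∈ Finset.range n,
              ((if (j:ℕ) = m then a m else if (j:ℕ) = m + 1 then -(b (m+1)) else 0) *
               (if (l:ℕ) = m then a m else if (l:ℕ) = m + 1 then -(b (m+1)) else 0)) =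
              (if m = (l:ℕ) then -(a m * b (m+1)) else 0) := by
            intro m _
            split_ifs <;> first | ring1 | omega
          rw [Finset.sum_congr rfl hpt,
            Finset.sum_ite_eq' (Finset.range n) ((l:ℕ)) (fun m => -(a m * b (m+1))),
            if_pos (Finset.mem_range.mpr (by omega)), ← h3]
          ring
        · rw [if_neg h3]
          have hpt : ∀ m ∈ Finset.range n,
              ((if (j:ℕ) = m then a m else if (j:ℕ) = m + 1 then -(b (m+1)) else 0) *
               (if (l:ℕ) = m then a m else if (l:ℕ) = m + 1 then -(b (m+1)) else 0)) = 0 := by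
            intro m _
            split_ifs <;> first | ring1 | omega
          rw [Finset.sum_congr rfl hpt, Finset.sum_const_zero, neg_zero]
  have hQ : ∀ x : Fin (n+1) → ℝ, dotProduct x (S *ᵥ x) ≤ 0 := by
    intro x
    rw [hST, Matrix.neg_mulVec, dotProduct_neg, ← Matrix.mulVec_mulVec,
      Matrix.dotProduct_mulVec, Matrix.vecMul_transpose]
    simp only [neg_nonpos]
    exact Finset.sum_nonneg fun i _ => mul_self_nonneg _
  -- S is symmetric
  have hHerm : S.IsHermitian := by
    have : Tᵀ = Tᴴ := by
      ext i j; simp [Matrix.conjTranspose_apply]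
    rw [hST, this]
    exact (Matrix.isHermitian_conjTranspose_mul_self T).neg
  set e : Fin (n+1) → ℝ := hHerm.eigenvalues with he_def
  set v : Fin (n+1) → (Fin (n+1) → ℝ) := fun k => ⇑(hHerm.eigenvectorBasis k) with hv_def
  have hEig : ∀ k, S *ᵥ v k = e k • v k := fun k => hHerm.mulVec_eigenvectorBasis k
  have hdot : ∀ i j, dotProduct (v i) (v j) = if i = j then 1 else 0 := by
    intro i j
    have h1 := orthonormal_iff_ite.mp hHerm.eigenvectorBasis.orthonormal i j
    have h2 : dotProduct (v i) (v j) = inner (𝕜 := ℝ)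
        (hHerm.eigenvectorBasis i) (hHerm.eigenvectorBasis j) := by
      simp only [PiLp.inner_apply, RCLike.inner_apply, conj_trivial]
      simp only [dotProduct, hv_def]
      exact Finset.sum_congr rfl fun _ _ => mul_comm _ _
    rw [h2, h1]
  have he_le : ∀ k, e k ≤ 0 := by
    intro k
    have h1 : dotProduct (v k) (S *ᵥ v k) = e k := by
      rw [hEig, dotProduct_smul, hdot, if_pos rfl, smul_eq_mul, mul_one]
    rw [← h1]; exact hQ _
  -- kernel rigidity: eigenvectors with vanishing first entry are zero
  have hker : ∀ (t : ℝ) (x : Fin (n+1) → ℝ), S *ᵥ x = t • x → x 0 = 0 → x = 0 := by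
    intro t x hx h0
    have key : ∀ m : ℕ, ∀ hm : m < n + 1, x ⟨m, hm⟩ = 0 := by
      intro m
      induction m using Nat.strong_induction_on with
      | _ m ih =>
        intro hm
        match m, ih, hm with
        | 0, ih, hm => exact h0
        | (p+1), ih, hm =>
          have hp : p < n := by omega
          have hrow := congrFun hx ⟨p, by omega⟩
          simp only [Matrix.mulVec, dotProduct, Pi.smul_apply, smul_eq_mul] at hrow
          have hxp : x ⟨p, by omega⟩ = 0 := ih p (by omega) (by omega)
          have hsum : ∑ l : Fin (n+1), S ⟨p, by omega⟩ l * x l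
              = S ⟨p, by omega⟩ ⟨p+1, hm⟩ * x ⟨p+1, hm⟩ := by
            apply Finset.sum_eq_single
            · intro l _ hne
              rcases le_or_gt (l : ℕ) p with hc | hc
              · have : x l = 0 := ih (l : ℕ) (by omega) (by omega)
                rw [this, mul_zero]
              · have hge : p + 2 ≤ (l : ℕ) := by
                  rcases Nat.lt_or_ge (l : ℕ) (p + 2) with h' | h'
                  · exfalso
                    apply hne
                    apply Fin.val_injective
                    simp only [Fin.val_mk]
                    omega
                  · exact h'
                have hval : S ⟨p, by omega⟩ l =
                    if p = (l:ℕ) then -(kk p * y2 + tγ p)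
                    else if (l:ℕ) = p + 1 then a p * b (l:ℕ)
                    else if p = (l:ℕ) + 1 then a (l:ℕ) * b p
                    else 0 := hS ⟨p, by omega⟩ l
                rw [hval, if_neg (by omega), if_neg (by omega), if_neg (by omega), zero_mul]
            · intro h
              exact absurd (Finset.mem_univ _) h
          rw [hsum, hxp, mul_zero] at hrow
          have hSpos : S ⟨p, by omega⟩ ⟨p+1, hm⟩ ≠ 0 := by
            have hval : S ⟨p, by omega⟩ ⟨p+1, hm⟩ =
                if p = p + 1 then -(kk p * y2 + tγ p)
                else if p + 1 = p + 1 then a p * b (p+1)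
                else if p = (p+1) + 1 then a (p+1) * b p
                else 0 := hS ⟨p, by omega⟩ ⟨p+1, hm⟩
            rw [hval, if_neg (by omega), if_pos rfl]
            exact (mul_pos (ha_pos p hp) (hb_pos (p+1) (by omega) (by omega))).ne'
          exact (mul_eq_zero.mp hrow).resolve_left hSpos
    funext l
    exact key l.1 l.2
  -- the eigenvalues are pairwise distinct
  have hinj : Function.Injective e := by
    intro i j hij
    by_contra hne
    have hji : S *ᵥ v j = e i • v j := by rw [hEig j, hij]
    set w : Fin (n+1) → ℝ := (v j 0) • v i - (v i 0) • v j with hw_def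
    have hw : S *ᵥ w = e i • w := by
      rw [hw_def, Matrix.mulVec_sub, Matrix.mulVec_smul, Matrix.mulVec_smul, hEig i, hji]
      module
    have hw0 : w 0 = 0 := by
      simp only [hw_def, Pi.sub_apply, Pi.smul_apply, smul_eq_mul]
      ring
    have hwz : w = 0 := hker _ _ hw hw0
    have heq : (v j 0) • v i = (v i 0) • v j := by
      rw [hw_def] at hwz
      rwa [sub_eq_zero] at hwz
    have d2 := congrArg (fun z => dotProduct z (v j)) heq
    simp only [smul_dotProduct, smul_eq_mul] at d2
    rw [hdot i j, hdot j j, if_neg hne, if_pos rfl, mul_zero, mul_one] at d2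
    have hvi0 : v i 0 = 0 := d2.symm
    have hviz : v i = 0 := hker (e i) (v i) (hEig i) hvi0
    have := hdot i i
    rw [if_pos rfl, hviz] at this
    simp [dotProduct] at this
  -- the characteristic polynomial factors
  have cp : A.charpoly = ∏ k, (X - C (e k)) := by
    rw [hcpS, charpoly_hermitian_real S hHerm]
  constructor
  · -- complex part
    intro μ hroot
    have hcpC : (A.map (fun t : ℝ => (t : ℂ))).charpoly = ∏ k, (X - C ((e k : ℂ))) := by
      have hmap : (A.map (fun t : ℝ => (t : ℂ))) = A.map (algebraMap ℝ ℂ) := rfl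
      rw [hmap, Matrix.charpoly_map, cp, Polynomial.map_prod]
      simp
    rw [hcpC] at hroot
    have hex : ∃ k, μ = (e k : ℂ) := by
      have := hroot
      simp only [Polynomial.IsRoot, Polynomial.eval_prod, Finset.prod_eq_zero_iff] at this
      obtain ⟨k, -, hk⟩ := this
      simp only [Polynomial.eval_sub, Polynomial.eval_X, Polynomial.eval_C, sub_eq_zero] at hk
      exact ⟨k, hk⟩
    obtain ⟨k, hk⟩ := hex
    subst hk
    refine ⟨by simp, by simpa using he_le k, ?_⟩
    rw [hcpC]
    exact rootMultiplicity_prod_X_sub_C (fun k => (e k : ℂ))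
      (fun i j hij => hinj (Complex.ofReal_injective hij)) k
  · -- 0 is an eigenvalue
    have hcol : ∀ l : Fin (n+1), ∑ i, A i l = 0 := by
      intro l
      have hl := l.isLt
      have hstep : ∑ i : Fin (n+1), A i l = ∑ m ∈ Finset.range (n+1),
          (if m = (l:ℕ) then -(kk m * y2 + tγ m)
            else if (l:ℕ) = m + 1 then tγ (l:ℕ)
            else if m = (l:ℕ) + 1 then kk (l:ℕ) * y2
            else 0) := by
        rw [Finset.sum_congr rfl (fun i (_ : i ∈ Finset.univ) => hA i l)]
        exact Fin.sum_univ_eq_sum_range (fun m =>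
          if m = (l:ℕ) then -(kk m * y2 + tγ m)
          else if (l:ℕ) = m + 1 then tγ (l:ℕ)
          else if m = (l:ℕ) + 1 then kk (l:ℕ) * y2
          else 0) (n+1)
      rw [hstep]
      have hpt : ∀ m ∈ Finset.range (n+1),
          (if m = (l:ℕ) then -(kk m * y2 + tγ m)
            else if (l:ℕ) = m + 1 then tγ (l:ℕ)
            else if m = (l:ℕ) + 1 then kk (l:ℕ) * y2
            else 0) =
          (if m = (l:ℕ) then -(kk m * y2 + tγ m) else 0)
            + ((if m + 1 = (l:ℕ) then tγ (l:ℕ) else 0)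
            + (if m = (l:ℕ) + 1 then kk (l:ℕ) * y2 else 0)) := by
        intro m _
        split_ifs <;> first | ring1 | omega
      rw [Finset.sum_congr rfl hpt, Finset.sum_add_distrib, Finset.sum_add_distrib,
        Finset.sum_ite_eq' (Finset.range (n+1)) ((l:ℕ))
          (fun m => -(kk m * y2 + tγ m)),
        Finset.sum_ite_eq' (Finset.range (n+1)) ((l:ℕ) + 1) (fun _ => kk (l:ℕ) * y2),
        if_pos (Finset.mem_range.mpr (by omega))]
      have hsecond : (∑ m ∈ Finset.range (n+1), (if m + 1 = (l:ℕ) then tγ (l:ℕ) else 0))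
          = tγ (l:ℕ) - (if (l:ℕ) = 0 then tγ 0 else 0) := by
        by_cases hl0 : (l:ℕ) = 0
        · rw [if_pos hl0, hl0]
          rw [Finset.sum_eq_zero (fun m _ => by rw [if_neg (by omega)])]
          ring
        · rw [if_neg hl0,
            Finset.sum_congr rfl (fun m _ =>
              show (if m + 1 = (l:ℕ) then tγ (l:ℕ) else 0)
                  = (if m = (l:ℕ) - 1 then tγ (l:ℕ) else 0) by
                by_cases h : m + 1 = (l:ℕ)
                · rw [if_pos h, if_pos (by omega)]
                · rw [if_neg h, if_neg (by omega)]),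
            Finset.sum_ite_eq' (Finset.range (n+1)) ((l:ℕ) - 1) (fun _ => tγ (l:ℕ)),
            if_pos (Finset.mem_range.mpr (by omega))]
          ring
      rw [hsecond]
      by_cases hln : (l:ℕ) < n
      · rw [if_pos (Finset.mem_range.mpr (by omega))]
        by_cases hl0 : (l:ℕ) = 0
        · rw [if_pos hl0, htγ0]
          ring
        · rw [if_neg hl0]
          ring
      · have hleq : (l:ℕ) = n := by omega
        rw [if_neg (show ¬((l:ℕ) + 1 ∈ Finset.range (n+1)) by
            rw [Finset.mem_range]; omega),
          if_neg (show ¬(l:ℕ) = 0 by omega), hleq, hkn]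
        ring
    have hdet0 : A.det = 0 := by
      rw [← Matrix.exists_vecMul_eq_zero_iff]
      refine ⟨fun _ => 1, ?_, ?_⟩
      · intro h
        have := congrFun h 0
        simp at this
      · funext l
        simpa [Matrix.vecMul, dotProduct] using hcol l
    have hcoeff := Matrix.det_eq_sign_charpoly_coeff A
    rw [hdet0] at hcoeff
    have : A.charpoly.coeff 0 = 0 := by
      have hne : ((-1 : ℝ)) ^ Fintype.card (Fin (n+1)) ≠ 0 := by
        simp
      field_simp at hcoeff
      exact (mul_eq_zero.mp hcoeff.symm).resolve_left hne
    rwa [Polynomial.IsRoot, ← Polynomial.coeff_zero_eq_eval_zero]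
end

section
/- Let γ_1, θ, k, δ_1, δ_2, ε_1, ε_2 be positive real numbers, set ε = ε_2/ε_1 and x̄_0 = γ_1/(1+γ_1), and define c_0 = ε ε_2 δ_1 (γ_1+1), c_1 = ε(γ_1+1)(ε_2(2k+δ_1)+1) + ε_2(2kθx̄_0 + δ_1(1+θx̄_0)), c_2 = ε(γ_1+1) + ε_2(2k+δ_1) + θx̄_0 + 1, and a_1 = ε_2δ_2 + c_2, a_2 = ε_2δ_2 c_2 + c_1, a_3 = ε_2δ_2 c_1 + c_0, a_4 = ε_2δ_2 c_0 + 2ε ε_2² δ_1 δ_2. Then every complex root λ of the polynomial W_1(λ) = λ⁴ + a_1 λ³ + a_2 λ² + a_3 λ + a_4 satisfies Re(λ) < 0. -/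
set_option maxHeartbeats 2000000 in

lemma rh4 (a b c d : ℝ) (ha : 0 < a) (hb : 0 < b) (hc : 0 < c) (hd : 0 < d)
    (h1 : c < a * b) (h2 : a ^ 2 * d + c ^ 2 < a * b * c) :
    ∀ lam : ℂ, lam ^ 4 + (a:ℂ)*lam^3 + (b:ℂ)*lam^2 + (c:ℂ)*lam + (d:ℂ) = 0 →
      lam.re < 0 := by
  intro lam h
  by_contra hx0
  push_neg at hx0
  rw [Complex.ext_iff] at h
  obtain ⟨hre, him⟩ := h
  simp only [pow_succ, pow_zero, one_mul, Complex.add_re, Complex.add_im,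
    Complex.mul_re, Complex.mul_im, Complex.ofReal_re, Complex.ofReal_im,
    Complex.zero_re, Complex.zero_im, zero_mul, mul_zero, sub_zero, zero_add,
    add_zero] at hre him
  set x := lam.re with hxd
  set y := lam.im with hyd
  have hre' : x^4 - 6*x^2*y^2 + y^4 + a*(x^3 - 3*x*y^2) + b*(x^2 - y^2)
      + c*x + d = 0 := by linear_combination hre
  have him' : y * (4*x^3 - 4*x*y^2 + 3*a*x^2 - a*y^2 + 2*b*x + c) = 0 := by
    linear_combination him
  rcases mul_eq_zero.mp him' with hy | hE
  · -- real root
    rw [hy] at hre'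
    nlinarith [mul_nonneg (mul_nonneg hx0 hx0) (mul_nonneg hx0 hx0),
      mul_nonneg (mul_nonneg hx0 hx0) hx0, mul_nonneg hx0 hx0,
      mul_pos ha (mul_pos hb hc)]
  · have ht : y^2 * (4*x + a) = 4*x^3 + 3*a*x^2 + 2*b*x + c := by
      linear_combination -hE
    have key : (4*x^3 + 3*a*x^2 + 2*b*x + c)^2
        - (6*x^2 + 3*a*x + b) * (4*x^3 + 3*a*x^2 + 2*b*x + c) * (4*x + a)
        + (x^4 + a*x^3 + b*x^2 + c*x + d) * (4*x + a)^2 = 0 := by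
      linear_combination (4*x + a)^2 * hre' -
        (y^2*(4*x+a) + (4*x^3 + 3*a*x^2 + 2*b*x + c)
          - (6*x^2 + 3*a*x + b)*(4*x+a)) * ht
    have h4xa : 0 < 4*x + a := by linarith
    have hT : 0 ≤ (4*(a*b-2*c)^2 + 4*a^3*c + 8*a^4*b)*x^2
        + (2*a*(a*b-2*c)^2 + 2*a^4*c)*x
        + a^2*(64*x^6 + 96*a*x^5 + (48*a^2+32*b)*x^4 + (8*a^3+32*a*b)*x^3) := by
      positivity
    have hkey2 : ((a*b*c - c^2) - a^2*d) * (4*x + a)^2 =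
        -((4*(a*b-2*c)^2 + 4*a^3*c + 8*a^4*b)*x^2
        + (2*a*(a*b-2*c)^2 + 2*a^4*c)*x
        + a^2*(64*x^6 + 96*a*x^5 + (48*a^2+32*b)*x^4 + (8*a^3+32*a*b)*x^3)) := by
      linear_combination (-(a^2)) * key
    nlinarith [mul_pos (show (0:ℝ) < a*b*c - c^2 - a^2*d by linarith)
      (mul_pos h4xa h4xa)]


set_option maxHeartbeats 4000000 in
/-- Every complex root of the characteristic polynomial `W₁` of the Jacobian
of the full Hes1 model with one binding site at its positive steady state has
negative real part (local asymptotic stability). -/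
theorem stmt_8 (γ1 θ kp δ1 δ2 ε1 ε2 : ℝ)
    (hγ1 : 0 < γ1) (hθ : 0 < θ) (hkp : 0 < kp) (hδ1 : 0 < δ1) (hδ2 : 0 < δ2)
    (hε1 : 0 < ε1) (hε2 : 0 < ε2)
    (ε : ℝ) (hε : ε = ε2 / ε1)
    (x0 : ℝ) (hx0 : x0 = γ1 / (1 + γ1))
    (c0 c1 c2 a1 a2 a3 a4 : ℝ)
    (hc0 : c0 = ε * ε2 * δ1 * (γ1 + 1))
    (hc1 : c1 = ε * (γ1 + 1) * (ε2 * (2 * kp + δ1) + 1)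
        + ε2 * (2 * kp * θ * x0 + δ1 * (1 + θ * x0)))
    (hc2 : c2 = ε * (γ1 + 1) + ε2 * (2 * kp + δ1) + θ * x0 + 1)
    (ha1 : a1 = ε2 * δ2 + c2)
    (ha2 : a2 = ε2 * δ2 * c2 + c1)
    (ha3 : a3 = ε2 * δ2 * c1 + c0)
    (ha4 : a4 = ε2 * δ2 * c0 + 2 * ε * ε2 ^ 2 * δ1 * δ2) :
    ∀ lam : ℂ, lam ^ 4 + (a1 : ℂ) * lam ^ 3 + (a2 : ℂ) * lam ^ 2
        + (a3 : ℂ) * lam + (a4 : ℂ) = 0 → lam.re < 0 := by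
  have hεp : 0 < ε := by rw [hε]; positivity
  have hx0p : 0 < x0 := by rw [hx0]; positivity
  subst hc0 hc1 hc2 ha1 ha2 ha3 ha4
  apply rh4
  · positivity
  · positivity
  · positivity
  · positivity
  · rw [← sub_pos]
    have hS : (0:ℝ) < ε + ε*ε + δ2*ε2 + 2*δ2*ε*ε2 + δ2*ε*ε*ε2 + δ2*δ2*ε2*ε2 + δ2*δ2*ε*ε2*ε2 + δ1*ε2 + 2*δ1*ε*ε2 + δ1*ε*ε*ε2 + 2*δ1*δ2*ε2*ε2 + 2*δ1*δ2*ε*ε2*ε2 + δ1*δ2*δ2*ε2*ε2*ε2 + δ1*δ1*ε2*ε2 + δ1*δ1*ε*ε2*ε2 + δ1*δ1*δ2*ε2*ε2*ε2 + 4*kp*ε*ε2 + 2*kp*ε*ε*ε2 + 4*kp*δ2*ε2*ε2 + 4*kp*δ2*ε*ε2*ε2 + 2*kp*δ2*δ2*ε2*ε2*ε2 + 2*kp*δ1*ε2*ε2 + 4*kp*δ1*ε*ε2*ε2 + 4*kp*δ1*δ2*ε2*ε2*ε2 + 4*kp*kp*ε*ε2*ε2 + 4*kp*kp*δ2*ε2*ε2*ε2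 + θ*ε*x0 + 2*θ*δ2*ε2*x0 + 2*θ*δ2*ε*ε2*x0 + θ*δ2*δ2*ε2*ε2*x0 + 2*θ*δ1*ε2*x0 + 2*θ*δ1*ε*ε2*x0 + 2*θ*δ1*δ2*ε2*ε2*x0 + θ*δ1*δ1*ε2*ε2*x0 + 2*θ*kp*ε2*x0 + 4*θ*kp*ε*ε2*x0 + 4*θ*kp*δ2*ε2*ε2*x0 + 4*θ*kp*δ1*ε2*ε2*x0 + 4*θ*kp*kp*ε2*ε2*x0 + θ*θ*δ2*ε2*x0*x0 + θ*θ*δ1*ε2*x0*x0 + 2*θ*θ*kp*ε2*x0*x0 + γ1*ε + 2*γ1*ε*ε + 2*γ1*δ2*ε*ε2 + 2*γ1*δ2*ε*ε*ε2 + γ1*δ2*δ2*ε*ε2*ε2 + 2*γ1*δ1*ε*ε2 + 2*γ1*δ1*ε*ε*ε2 + 2*γ1*δ1*δ2*ε*ε2*ε2 + γ1*δ1*δ1*ε*ε2*ε2 + 4*γ1*kp*ε*ε2 + 4*γ1*kp*ε*ε*ε2 + 4*γ1*kp*δ2*ε*ε2*ε2 + 4*γ1*kp*δ1*ε*ε2*ε2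 + 4*γ1*kp*kp*ε*ε2*ε2 + γ1*θ*ε*x0 + 2*γ1*θ*δ2*ε*ε2*x0 + 2*γ1*θ*δ1*ε*ε2*x0 + 4*γ1*θ*kp*ε*ε2*x0 + γ1*γ1*ε*ε + γ1*γ1*δ2*ε*ε*ε2 + γ1*γ1*δ1*ε*ε*ε2 + 2*γ1*γ1*kp*ε*ε*ε2 := by positivity
    convert hS using 1
    ring
  · rw [← sub_pos]
    have hS : (0:ℝ) < δ2*ε*ε*ε2 + δ2*ε*ε*ε*ε2 + δ2*δ2*ε*ε2*ε2 + 2*δ2*δ2*ε*ε*ε2*ε2 + δ2*δ2*ε*ε*ε*ε2*ε2 + δ2*δ2*δ2*ε*ε2*ε2*ε2 + δ2*δ2*δ2*ε*ε*ε2*ε2*ε2 + δ1*ε*ε*ε2 + δ1*ε*ε*ε*ε2 + δ1*δ2*δ2*ε2*ε2*ε2 + δ1*δ2*δ2*ε*ε*ε*ε2*ε2*ε2 + δ1*δ2*δ2*δ2*ε2*ε2*ε2*ε2 + δ1*δ2*δ2*δ2*ε*ε*ε2*ε2*ε2*ε2 + δ1*δ1*ε*ε2*ε2 + 2*δ1*δ1*ε*ε*ε2*ε2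 + δ1*δ1*ε*ε*ε*ε2*ε2 + δ1*δ1*δ2*ε2*ε2*ε2 + δ1*δ1*δ2*ε*ε*ε*ε2*ε2*ε2 + 2*δ1*δ1*δ2*δ2*ε2*ε2*ε2*ε2 + 2*δ1*δ1*δ2*δ2*ε*ε*ε2*ε2*ε2*ε2 + δ1*δ1*δ2*δ2*δ2*ε2*ε2*ε2*ε2*ε2 + δ1*δ1*δ2*δ2*δ2*ε*ε2*ε2*ε2*ε2*ε2 + δ1*δ1*δ1*ε*ε2*ε2*ε2 + δ1*δ1*δ1*ε*ε*ε2*ε2*ε2 + δ1*δ1*δ1*δ2*ε2*ε2*ε2*ε2 + δ1*δ1*δ1*δ2*ε*ε*ε2*ε2*ε2*ε2 + δ1*δ1*δ1*δ2*δ2*ε2*ε2*ε2*ε2*ε2 + δ1*δ1*δ1*δ2*δ2*ε*ε2*ε2*ε2*ε2*ε2 + 6*kp*δ2*ε*ε*ε2*ε2 + 4*kp*δ2*ε*ε*ε*ε2*ε2 + 6*kp*δ2*δ2*ε*ε2*ε2*ε2 + 8*kp*δ2*δ2*ε*ε*ε2*ε2*ε2 + 2*kp*δ2*δ2*ε*ε*ε*ε2*ε2*ε2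 + 4*kp*δ2*δ2*δ2*ε*ε2*ε2*ε2*ε2 + 2*kp*δ2*δ2*δ2*ε*ε*ε2*ε2*ε2*ε2 + 4*kp*δ1*ε*ε*ε2*ε2 + 2*kp*δ1*ε*ε*ε*ε2*ε2 + 6*kp*δ1*δ2*ε*ε*ε2*ε2*ε2 + 4*kp*δ1*δ2*ε*ε*ε*ε2*ε2*ε2 + 4*kp*δ1*δ2*δ2*ε2*ε2*ε2*ε2 + 6*kp*δ1*δ2*δ2*ε*ε2*ε2*ε2*ε2 + 8*kp*δ1*δ2*δ2*ε*ε*ε2*ε2*ε2*ε2 + 2*kp*δ1*δ2*δ2*δ2*ε2*ε2*ε2*ε2*ε2 + 4*kp*δ1*δ2*δ2*δ2*ε*ε2*ε2*ε2*ε2*ε2 + 2*kp*δ1*δ1*ε*ε2*ε2*ε2 + 4*kp*δ1*δ1*ε*ε*ε2*ε2*ε2 + 2*kp*δ1*δ1*δ2*ε2*ε2*ε2*ε2 + 6*kp*δ1*δ1*δ2*ε*ε*ε2*ε2*ε2*ε2 + 4*kp*δ1*δ1*δ2*δ2*ε2*ε2*ε2*ε2*ε2 + 6*kp*δ1*δ1*δ2*δ2*ε*ε2*ε2*ε2*ε2*ε2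 + 12*kp*kp*δ2*ε*ε*ε2*ε2*ε2 + 4*kp*kp*δ2*ε*ε*ε*ε2*ε2*ε2 + 12*kp*kp*δ2*δ2*ε*ε2*ε2*ε2*ε2 + 8*kp*kp*δ2*δ2*ε*ε*ε2*ε2*ε2*ε2 + 4*kp*kp*δ2*δ2*δ2*ε*ε2*ε2*ε2*ε2*ε2 + 4*kp*kp*δ1*ε*ε*ε2*ε2*ε2 + 12*kp*kp*δ1*δ2*ε*ε*ε2*ε2*ε2*ε2 + 4*kp*kp*δ1*δ2*δ2*ε2*ε2*ε2*ε2*ε2 + 12*kp*kp*δ1*δ2*δ2*ε*ε2*ε2*ε2*ε2*ε2 + 8*kp*kp*kp*δ2*ε*ε*ε2*ε2*ε2*ε2 + 8*kp*kp*kp*δ2*δ2*ε*ε2*ε2*ε2*ε2*ε2 + θ*δ2*ε*ε*ε2*x0 + 2*θ*δ2*δ2*ε*ε2*ε2*x0 + 2*θ*δ2*δ2*ε*ε*ε2*ε2*x0 + θ*δ2*δ2*δ2*ε*ε2*ε2*ε2*x0 + θ*δ1*ε*ε*ε2*x0 + 3*θ*δ1*δ2*δ2*ε2*ε2*ε2*x0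 + 3*θ*δ1*δ2*δ2*ε*ε2*ε2*ε2*x0 + 3*θ*δ1*δ2*δ2*ε*ε*ε2*ε2*ε2*x0 + 2*θ*δ1*δ2*δ2*δ2*ε2*ε2*ε2*ε2*x0 + 2*θ*δ1*δ2*δ2*δ2*ε*ε2*ε2*ε2*ε2*x0 + 2*θ*δ1*δ1*ε*ε2*ε2*x0 + 2*θ*δ1*δ1*ε*ε*ε2*ε2*x0 + 3*θ*δ1*δ1*δ2*ε2*ε2*ε2*x0 + 3*θ*δ1*δ1*δ2*ε*ε2*ε2*ε2*x0 + 3*θ*δ1*δ1*δ2*ε*ε*ε2*ε2*ε2*x0 + 4*θ*δ1*δ1*δ2*δ2*ε2*ε2*ε2*ε2*x0 + 4*θ*δ1*δ1*δ2*δ2*ε*ε2*ε2*ε2*ε2*x0 + θ*δ1*δ1*δ2*δ2*δ2*ε2*ε2*ε2*ε2*ε2*x0 + θ*δ1*δ1*δ1*ε*ε2*ε2*ε2*x0 + 2*θ*δ1*δ1*δ1*δ2*ε2*ε2*ε2*ε2*x0 + 2*θ*δ1*δ1*δ1*δ2*ε*ε2*ε2*ε2*ε2*x0 + θ*δ1*δ1*δ1*δ2*δ2*ε2*ε2*ε2*ε2*ε2*x0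 + 4*θ*kp*δ2*ε*ε2*ε2*x0 + 8*θ*kp*δ2*ε*ε*ε2*ε2*x0 + 2*θ*kp*δ2*δ2*ε2*ε2*ε2*x0 + 12*θ*kp*δ2*δ2*ε*ε2*ε2*ε2*x0 + 6*θ*kp*δ2*δ2*ε*ε*ε2*ε2*ε2*x0 + 2*θ*kp*δ2*δ2*δ2*ε2*ε2*ε2*ε2*x0 + 4*θ*kp*δ2*δ2*δ2*ε*ε2*ε2*ε2*ε2*x0 + 2*θ*kp*δ1*ε*ε2*ε2*x0 + 4*θ*kp*δ1*ε*ε*ε2*ε2*x0 + 4*θ*kp*δ1*δ2*ε2*ε2*ε2*x0 + 14*θ*kp*δ1*δ2*ε*ε2*ε2*ε2*x0 + 12*θ*kp*δ1*δ2*ε*ε*ε2*ε2*ε2*x0 + 12*θ*kp*δ1*δ2*δ2*ε2*ε2*ε2*ε2*x0 + 16*θ*kp*δ1*δ2*δ2*ε*ε2*ε2*ε2*ε2*x0 + 4*θ*kp*δ1*δ2*δ2*δ2*ε2*ε2*ε2*ε2*ε2*x0 + 4*θ*kp*δ1*δ1*ε*ε2*ε2*ε2*x0 + 8*θ*kp*δ1*δ1*δ2*ε2*ε2*ε2*ε2*x0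 + 12*θ*kp*δ1*δ1*δ2*ε*ε2*ε2*ε2*ε2*x0 + 6*θ*kp*δ1*δ1*δ2*δ2*ε2*ε2*ε2*ε2*ε2*x0 + 16*θ*kp*kp*δ2*ε*ε2*ε2*ε2*x0 + 12*θ*kp*kp*δ2*ε*ε*ε2*ε2*ε2*x0 + 8*θ*kp*kp*δ2*δ2*ε2*ε2*ε2*ε2*x0 + 16*θ*kp*kp*δ2*δ2*ε*ε2*ε2*ε2*ε2*x0 + 4*θ*kp*kp*δ2*δ2*δ2*ε2*ε2*ε2*ε2*ε2*x0 + 4*θ*kp*kp*δ1*ε*ε2*ε2*ε2*x0 + 8*θ*kp*kp*δ1*δ2*ε2*ε2*ε2*ε2*x0 + 24*θ*kp*kp*δ1*δ2*ε*ε2*ε2*ε2*ε2*x0 + 12*θ*kp*kp*δ1*δ2*δ2*ε2*ε2*ε2*ε2*ε2*x0 + 16*θ*kp*kp*kp*δ2*ε*ε2*ε2*ε2*ε2*x0 + 8*θ*kp*kp*kp*δ2*δ2*ε2*ε2*ε2*ε2*ε2*x0 + θ*θ*δ2*δ2*ε*ε2*ε2*x0*x0 + 3*θ*θ*δ1*δ2*δ2*ε2*ε2*ε2*x0*x0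 + 3*θ*θ*δ1*δ2*δ2*ε*ε2*ε2*ε2*x0*x0 + θ*θ*δ1*δ2*δ2*δ2*ε2*ε2*ε2*ε2*x0*x0 + θ*θ*δ1*δ1*ε*ε2*ε2*x0*x0 + 3*θ*θ*δ1*δ1*δ2*ε2*ε2*ε2*x0*x0 + 3*θ*θ*δ1*δ1*δ2*ε*ε2*ε2*ε2*x0*x0 + 2*θ*θ*δ1*δ1*δ2*δ2*ε2*ε2*ε2*ε2*x0*x0 + θ*θ*δ1*δ1*δ1*δ2*ε2*ε2*ε2*ε2*x0*x0 + 4*θ*θ*kp*δ2*ε*ε2*ε2*x0*x0 + 4*θ*θ*kp*δ2*δ2*ε2*ε2*ε2*x0*x0 + 6*θ*θ*kp*δ2*δ2*ε*ε2*ε2*ε2*x0*x0 + 2*θ*θ*kp*δ2*δ2*δ2*ε2*ε2*ε2*ε2*x0*x0 + 2*θ*θ*kp*δ1*ε*ε2*ε2*x0*x0 + 8*θ*θ*kp*δ1*δ2*ε2*ε2*ε2*x0*x0 + 12*θ*θ*kp*δ1*δ2*ε*ε2*ε2*ε2*x0*x0 + 8*θ*θ*kp*δ1*δ2*δ2*ε2*ε2*ε2*ε2*x0*x0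 + 6*θ*θ*kp*δ1*δ1*δ2*ε2*ε2*ε2*ε2*x0*x0 + 4*θ*θ*kp*kp*δ2*ε2*ε2*ε2*x0*x0 + 12*θ*θ*kp*kp*δ2*ε*ε2*ε2*ε2*x0*x0 + 8*θ*θ*kp*kp*δ2*δ2*ε2*ε2*ε2*ε2*x0*x0 + 12*θ*θ*kp*kp*δ1*δ2*ε2*ε2*ε2*ε2*x0*x0 + 8*θ*θ*kp*kp*kp*δ2*ε2*ε2*ε2*ε2*x0*x0 + θ*θ*θ*δ1*δ2*δ2*ε2*ε2*ε2*x0*x0*x0 + θ*θ*θ*δ1*δ1*δ2*ε2*ε2*ε2*x0*x0*x0 + 2*θ*θ*θ*kp*δ2*δ2*ε2*ε2*ε2*x0*x0*x0 + 4*θ*θ*θ*kp*δ1*δ2*ε2*ε2*ε2*x0*x0*x0 + 4*θ*θ*θ*kp*kp*δ2*ε2*ε2*ε2*x0*x0*x0 + 2*γ1*δ2*ε*ε*ε2 + 3*γ1*δ2*ε*ε*ε*ε2 + γ1*δ2*δ2*ε*ε2*ε2 + 4*γ1*δ2*δ2*ε*ε*ε2*ε2 + 3*γ1*δ2*δ2*ε*ε*ε*ε2*ε2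 + γ1*δ2*δ2*δ2*ε*ε2*ε2*ε2 + 2*γ1*δ2*δ2*δ2*ε*ε*ε2*ε2*ε2 + 2*γ1*δ1*ε*ε*ε2 + 3*γ1*δ1*ε*ε*ε*ε2 + 2*γ1*δ1*δ2*ε*ε2*ε2 + 4*γ1*δ1*δ2*ε*ε*ε2*ε2 + 2*γ1*δ1*δ2*ε*ε*ε*ε2*ε2 + 4*γ1*δ1*δ2*δ2*ε*ε2*ε2*ε2 + 4*γ1*δ1*δ2*δ2*ε*ε*ε2*ε2*ε2 + 3*γ1*δ1*δ2*δ2*ε*ε*ε*ε2*ε2*ε2 + 2*γ1*δ1*δ2*δ2*δ2*ε*ε2*ε2*ε2*ε2 + 2*γ1*δ1*δ2*δ2*δ2*ε*ε*ε2*ε2*ε2*ε2 + γ1*δ1*δ1*ε*ε2*ε2 + 4*γ1*δ1*δ1*ε*ε*ε2*ε2 + 3*γ1*δ1*δ1*ε*ε*ε*ε2*ε2 + 4*γ1*δ1*δ1*δ2*ε*ε2*ε2*ε2 + 4*γ1*δ1*δ1*δ2*ε*ε*ε2*ε2*ε2 + 3*γ1*δ1*δ1*δ2*ε*ε*ε*ε2*ε2*ε2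 + 4*γ1*δ1*δ1*δ2*δ2*ε*ε2*ε2*ε2*ε2 + 4*γ1*δ1*δ1*δ2*δ2*ε*ε*ε2*ε2*ε2*ε2 + γ1*δ1*δ1*δ2*δ2*δ2*ε*ε2*ε2*ε2*ε2*ε2 + γ1*δ1*δ1*δ1*ε*ε2*ε2*ε2 + 2*γ1*δ1*δ1*δ1*ε*ε*ε2*ε2*ε2 + 2*γ1*δ1*δ1*δ1*δ2*ε*ε2*ε2*ε2*ε2 + 2*γ1*δ1*δ1*δ1*δ2*ε*ε*ε2*ε2*ε2*ε2 + γ1*δ1*δ1*δ1*δ2*δ2*ε*ε2*ε2*ε2*ε2*ε2 + 12*γ1*kp*δ2*ε*ε*ε2*ε2 + 12*γ1*kp*δ2*ε*ε*ε*ε2*ε2 + 6*γ1*kp*δ2*δ2*ε*ε2*ε2*ε2 + 16*γ1*kp*δ2*δ2*ε*ε*ε2*ε2*ε2 + 6*γ1*kp*δ2*δ2*ε*ε*ε*ε2*ε2*ε2 + 4*γ1*kp*δ2*δ2*δ2*ε*ε2*ε2*ε2*ε2 + 4*γ1*kp*δ2*δ2*δ2*ε*ε*ε2*ε2*ε2*ε2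 + 8*γ1*kp*δ1*ε*ε*ε2*ε2 + 6*γ1*kp*δ1*ε*ε*ε*ε2*ε2 + 8*γ1*kp*δ1*δ2*ε*ε2*ε2*ε2 + 20*γ1*kp*δ1*δ2*ε*ε*ε2*ε2*ε2 + 12*γ1*kp*δ1*δ2*ε*ε*ε*ε2*ε2*ε2 + 14*γ1*kp*δ1*δ2*δ2*ε*ε2*ε2*ε2*ε2 + 16*γ1*kp*δ1*δ2*δ2*ε*ε*ε2*ε2*ε2*ε2 + 4*γ1*kp*δ1*δ2*δ2*δ2*ε*ε2*ε2*ε2*ε2*ε2 + 2*γ1*kp*δ1*δ1*ε*ε2*ε2*ε2 + 8*γ1*kp*δ1*δ1*ε*ε*ε2*ε2*ε2 + 8*γ1*kp*δ1*δ1*δ2*ε*ε2*ε2*ε2*ε2 + 12*γ1*kp*δ1*δ1*δ2*ε*ε*ε2*ε2*ε2*ε2 + 6*γ1*kp*δ1*δ1*δ2*δ2*ε*ε2*ε2*ε2*ε2*ε2 + 24*γ1*kp*kp*δ2*ε*ε*ε2*ε2*ε2 + 12*γ1*kp*kp*δ2*ε*ε*ε*ε2*ε2*ε2 + 12*γ1*kp*kp*δ2*δ2*ε*ε2*ε2*ε2*ε2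 + 16*γ1*kp*kp*δ2*δ2*ε*ε*ε2*ε2*ε2*ε2 + 4*γ1*kp*kp*δ2*δ2*δ2*ε*ε2*ε2*ε2*ε2*ε2 + 8*γ1*kp*kp*δ1*ε*ε*ε2*ε2*ε2 + 8*γ1*kp*kp*δ1*δ2*ε*ε2*ε2*ε2*ε2 + 24*γ1*kp*kp*δ1*δ2*ε*ε*ε2*ε2*ε2*ε2 + 12*γ1*kp*kp*δ1*δ2*δ2*ε*ε2*ε2*ε2*ε2*ε2 + 16*γ1*kp*kp*kp*δ2*ε*ε*ε2*ε2*ε2*ε2 + 8*γ1*kp*kp*kp*δ2*δ2*ε*ε2*ε2*ε2*ε2*ε2 + 2*γ1*θ*δ2*ε*ε*ε2*x0 + 2*γ1*θ*δ2*δ2*ε*ε2*ε2*x0 + 4*γ1*θ*δ2*δ2*ε*ε*ε2*ε2*x0 + γ1*θ*δ2*δ2*δ2*ε*ε2*ε2*ε2*x0 + 2*γ1*θ*δ1*ε*ε*ε2*x0 + 4*γ1*θ*δ1*δ2*ε*ε2*ε2*x0 + 4*γ1*θ*δ1*δ2*ε*ε*ε2*ε2*x0 + 7*γ1*θ*δ1*δ2*δ2*ε*ε2*ε2*ε2*x0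 + 6*γ1*θ*δ1*δ2*δ2*ε*ε*ε2*ε2*ε2*x0 + 2*γ1*θ*δ1*δ2*δ2*δ2*ε*ε2*ε2*ε2*ε2*x0 + 2*γ1*θ*δ1*δ1*ε*ε2*ε2*x0 + 4*γ1*θ*δ1*δ1*ε*ε*ε2*ε2*x0 + 7*γ1*θ*δ1*δ1*δ2*ε*ε2*ε2*ε2*x0 + 6*γ1*θ*δ1*δ1*δ2*ε*ε*ε2*ε2*ε2*x0 + 4*γ1*θ*δ1*δ1*δ2*δ2*ε*ε2*ε2*ε2*ε2*x0 + γ1*θ*δ1*δ1*δ1*ε*ε2*ε2*ε2*x0 + 2*γ1*θ*δ1*δ1*δ1*δ2*ε*ε2*ε2*ε2*ε2*x0 + 4*γ1*θ*kp*δ2*ε*ε2*ε2*x0 + 16*γ1*θ*kp*δ2*ε*ε*ε2*ε2*x0 + 12*γ1*θ*kp*δ2*δ2*ε*ε2*ε2*ε2*x0 + 12*γ1*θ*kp*δ2*δ2*ε*ε*ε2*ε2*ε2*x0 + 4*γ1*θ*kp*δ2*δ2*δ2*ε*ε2*ε2*ε2*ε2*x0 + 2*γ1*θ*kp*δ1*ε*ε2*ε2*x0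 + 8*γ1*θ*kp*δ1*ε*ε*ε2*ε2*x0 + 22*γ1*θ*kp*δ1*δ2*ε*ε2*ε2*ε2*x0 + 24*γ1*θ*kp*δ1*δ2*ε*ε*ε2*ε2*ε2*x0 + 16*γ1*θ*kp*δ1*δ2*δ2*ε*ε2*ε2*ε2*ε2*x0 + 4*γ1*θ*kp*δ1*δ1*ε*ε2*ε2*ε2*x0 + 12*γ1*θ*kp*δ1*δ1*δ2*ε*ε2*ε2*ε2*ε2*x0 + 16*γ1*θ*kp*kp*δ2*ε*ε2*ε2*ε2*x0 + 24*γ1*θ*kp*kp*δ2*ε*ε*ε2*ε2*ε2*x0 + 16*γ1*θ*kp*kp*δ2*δ2*ε*ε2*ε2*ε2*ε2*x0 + 4*γ1*θ*kp*kp*δ1*ε*ε2*ε2*ε2*x0 + 24*γ1*θ*kp*kp*δ1*δ2*ε*ε2*ε2*ε2*ε2*x0 + 16*γ1*θ*kp*kp*kp*δ2*ε*ε2*ε2*ε2*ε2*x0 + γ1*θ*θ*δ2*δ2*ε*ε2*ε2*x0*x0 + 2*γ1*θ*θ*δ1*δ2*ε*ε2*ε2*x0*x0 + 3*γ1*θ*θ*δ1*δ2*δ2*ε*ε2*ε2*ε2*x0*x0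 + γ1*θ*θ*δ1*δ1*ε*ε2*ε2*x0*x0 + 3*γ1*θ*θ*δ1*δ1*δ2*ε*ε2*ε2*ε2*x0*x0 + 4*γ1*θ*θ*kp*δ2*ε*ε2*ε2*x0*x0 + 6*γ1*θ*θ*kp*δ2*δ2*ε*ε2*ε2*ε2*x0*x0 + 2*γ1*θ*θ*kp*δ1*ε*ε2*ε2*x0*x0 + 12*γ1*θ*θ*kp*δ1*δ2*ε*ε2*ε2*ε2*x0*x0 + 12*γ1*θ*θ*kp*kp*δ2*ε*ε2*ε2*ε2*x0*x0 + γ1*γ1*δ2*ε*ε*ε2 + 3*γ1*γ1*δ2*ε*ε*ε*ε2 + 2*γ1*γ1*δ2*δ2*ε*ε*ε2*ε2 + 3*γ1*γ1*δ2*δ2*ε*ε*ε*ε2*ε2 + γ1*γ1*δ2*δ2*δ2*ε*ε*ε2*ε2*ε2 + γ1*γ1*δ1*ε*ε*ε2 + 3*γ1*γ1*δ1*ε*ε*ε*ε2 + 4*γ1*γ1*δ1*δ2*ε*ε*ε2*ε2 + 4*γ1*γ1*δ1*δ2*ε*ε*ε*ε2*ε2 + 4*γ1*γ1*δ1*δ2*δ2*ε*ε*ε2*ε2*ε2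 + 3*γ1*γ1*δ1*δ2*δ2*ε*ε*ε*ε2*ε2*ε2 + γ1*γ1*δ1*δ2*δ2*δ2*ε*ε*ε2*ε2*ε2*ε2 + 2*γ1*γ1*δ1*δ1*ε*ε*ε2*ε2 + 3*γ1*γ1*δ1*δ1*ε*ε*ε*ε2*ε2 + 4*γ1*γ1*δ1*δ1*δ2*ε*ε*ε2*ε2*ε2 + 3*γ1*γ1*δ1*δ1*δ2*ε*ε*ε*ε2*ε2*ε2 + 2*γ1*γ1*δ1*δ1*δ2*δ2*ε*ε*ε2*ε2*ε2*ε2 + γ1*γ1*δ1*δ1*δ1*ε*ε*ε2*ε2*ε2 + γ1*γ1*δ1*δ1*δ1*δ2*ε*ε*ε2*ε2*ε2*ε2 + 6*γ1*γ1*kp*δ2*ε*ε*ε2*ε2 + 12*γ1*γ1*kp*δ2*ε*ε*ε*ε2*ε2 + 8*γ1*γ1*kp*δ2*δ2*ε*ε*ε2*ε2*ε2 + 6*γ1*γ1*kp*δ2*δ2*ε*ε*ε*ε2*ε2*ε2 + 2*γ1*γ1*kp*δ2*δ2*δ2*ε*ε*ε2*ε2*ε2*ε2 + 4*γ1*γ1*kp*δ1*ε*ε*ε2*ε2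 + 6*γ1*γ1*kp*δ1*ε*ε*ε*ε2*ε2 + 14*γ1*γ1*kp*δ1*δ2*ε*ε*ε2*ε2*ε2 + 12*γ1*γ1*kp*δ1*δ2*ε*ε*ε*ε2*ε2*ε2 + 8*γ1*γ1*kp*δ1*δ2*δ2*ε*ε*ε2*ε2*ε2*ε2 + 4*γ1*γ1*kp*δ1*δ1*ε*ε*ε2*ε2*ε2 + 6*γ1*γ1*kp*δ1*δ1*δ2*ε*ε*ε2*ε2*ε2*ε2 + 12*γ1*γ1*kp*kp*δ2*ε*ε*ε2*ε2*ε2 + 12*γ1*γ1*kp*kp*δ2*ε*ε*ε*ε2*ε2*ε2 + 8*γ1*γ1*kp*kp*δ2*δ2*ε*ε*ε2*ε2*ε2*ε2 + 4*γ1*γ1*kp*kp*δ1*ε*ε*ε2*ε2*ε2 + 12*γ1*γ1*kp*kp*δ1*δ2*ε*ε*ε2*ε2*ε2*ε2 + 8*γ1*γ1*kp*kp*kp*δ2*ε*ε*ε2*ε2*ε2*ε2 + γ1*γ1*θ*δ2*ε*ε*ε2*x0 + 2*γ1*γ1*θ*δ2*δ2*ε*ε*ε2*ε2*x0 + γ1*γ1*θ*δ1*ε*ε*ε2*x0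 + 4*γ1*γ1*θ*δ1*δ2*ε*ε*ε2*ε2*x0 + 3*γ1*γ1*θ*δ1*δ2*δ2*ε*ε*ε2*ε2*ε2*x0 + 2*γ1*γ1*θ*δ1*δ1*ε*ε*ε2*ε2*x0 + 3*γ1*γ1*θ*δ1*δ1*δ2*ε*ε*ε2*ε2*ε2*x0 + 8*γ1*γ1*θ*kp*δ2*ε*ε*ε2*ε2*x0 + 6*γ1*γ1*θ*kp*δ2*δ2*ε*ε*ε2*ε2*ε2*x0 + 4*γ1*γ1*θ*kp*δ1*ε*ε*ε2*ε2*x0 + 12*γ1*γ1*θ*kp*δ1*δ2*ε*ε*ε2*ε2*ε2*x0 + 12*γ1*γ1*θ*kp*kp*δ2*ε*ε*ε2*ε2*ε2*x0 + γ1*γ1*γ1*δ2*ε*ε*ε*ε2 + γ1*γ1*γ1*δ2*δ2*ε*ε*ε*ε2*ε2 + γ1*γ1*γ1*δ1*ε*ε*ε*ε2 + 2*γ1*γ1*γ1*δ1*δ2*ε*ε*ε*ε2*ε2 + γ1*γ1*γ1*δ1*δ2*δ2*ε*ε*ε*ε2*ε2*ε2 + γ1*γ1*γ1*δ1*δ1*ε*ε*ε*ε2*ε2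 + γ1*γ1*γ1*δ1*δ1*δ2*ε*ε*ε*ε2*ε2*ε2 + 4*γ1*γ1*γ1*kp*δ2*ε*ε*ε*ε2*ε2 + 2*γ1*γ1*γ1*kp*δ2*δ2*ε*ε*ε*ε2*ε2*ε2 + 2*γ1*γ1*γ1*kp*δ1*ε*ε*ε*ε2*ε2 + 4*γ1*γ1*γ1*kp*δ1*δ2*ε*ε*ε*ε2*ε2*ε2 + 4*γ1*γ1*γ1*kp*kp*δ2*ε*ε*ε*ε2*ε2*ε2 := by positivity
    convert hS using 1
    ring
end

section
/- Let γ_1, θ, k, δ_1, δ_2, ε_2 and ε be positive real numbers, set x̄_0 = γ_1/(1+γ_1), and define c_0 = ε ε_2 δ_1 (γ_1+1), c_1 = ε(γ_1+1)(ε_2(2k+δ_1)+1) + ε_2(2kθx̄_0 + δ_1(1+θx̄_0)), c_2 = ε(γ_1+1) + ε_2(2k+δ_1) + θx̄_0 + 1, and a_1 = ε_2δ_2 + c_2, a_2 = ε_2δ_2 c_2 + c_1, a_3 = ε_2δ_2 c_1 + c_0, a_4 = ε_2δ_2 c_0 + 2ε ε_2² δ_1 δ_2. Then a_3(a_1 a_2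 − a_3) − a_1² a_4 > 0. -/
set_option maxHeartbeats 1600000 in
set_option maxRecDepth 8000 in
/-- The Hurwitz determinant condition `a₃(a₁a₂ − a₃) − a₁²a₄ > 0` for the
quartic characteristic polynomial of the full Hes1 model with one binding
site at its positive steady state. -/
theorem stmt_9 (γ1 θ kp δ1 δ2 ε2 ε : ℝ)
    (hγ1 : 0 < γ1) (hθ : 0 < θ) (hkp : 0 < kp) (hδ1 : 0 < δ1) (hδ2 : 0 < δ2)
    (hε2 : 0 < ε2) (hε : 0 < ε)
    (x0 : ℝ) (hx0 : x0 = γ1 / (1 + γ1))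
    (c0 c1 c2 a1 a2 a3 a4 : ℝ)
    (hc0 : c0 = ε * ε2 * δ1 * (γ1 + 1))
    (hc1 : c1 = ε * (γ1 + 1) * (ε2 * (2 * kp + δ1) + 1)
        + ε2 * (2 * kp * θ * x0 + δ1 * (1 + θ * x0)))
    (hc2 : c2 = ε * (γ1 + 1) + ε2 * (2 * kp + δ1) + θ * x0 + 1)
    (ha1 : a1 = ε2 * δ2 + c2)
    (ha2 : a2 = ε2 * δ2 * c2 + c1)
    (ha3 : a3 = ε2 * δ2 * c1 + c0)
    (ha4 : a4 = ε2 * δ2 * c0 + 2 * ε * ε2 ^ 2 * δ1 * δ2) :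
    a3 * (a1 * a2 - a3) - a1 ^ 2 * a4 > 0 := by
  have hx : (0:ℝ) < x0 := by rw [hx0]; positivity
  have h3 : (0:ℝ) ≤ c1 * c2 - c0 - 2 * (ε * ε2 * δ1) := by
    have h : c1 * c2 - c0 - 2 * (ε * ε2 * δ1) = (ε +
      ε^2 +
      δ1 * ε2 +
      δ1 * ε2 * ε^2 +
      δ1^2 * ε2^2 +
      δ1^2 * ε2^2 * ε +
      4 * kp * ε2 * ε +
      2 * kp * ε2 * ε^2 +
      2 * kp * δ1 * ε2^2 +
      4 * kp * δ1 * ε2^2 * ε +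
      4 * kp^2 * ε2^2 * ε +
      θ * ε * x0 +
      2 * θ * δ1 * ε2 * x0 +
      2 * θ * δ1 * ε2 * ε * x0 +
      θ * δ1^2 * ε2^2 * x0 +
      2 * θ * kp * ε2 * x0 +
      4 * θ * kp * ε2 * ε * x0 +
      4 * θ * kp * δ1 * ε2^2 * x0 +
      4 * θ * kp^2 * ε2^2 * x0 +
      θ^2 * δ1 * ε2 * x0^2 +
      2 * θ^2 * kp * ε2 * x0^2 +
      γ1 * ε +
      2 * γ1 * ε^2 +
      2 * γ1 * δ1 * ε2 * ε +
      2 * γ1 * δ1 * ε2 * ε^2 +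
      γ1 * δ1^2 * ε2^2 * ε +
      4 * γ1 * kp * ε2 * ε +
      4 * γ1 * kp * ε2 * ε^2 +
      4 * γ1 * kp * δ1 * ε2^2 * ε +
      4 * γ1 * kp^2 * ε2^2 * ε +
      γ1 * θ * ε * x0 +
      2 * γ1 * θ * δ1 * ε2 * ε * x0 +
      4 * γ1 * θ * kp * ε2 * ε * x0 +
      γ1^2 * ε^2 +
      γ1^2 * δ1 * ε2 * ε^2 +
      2 * γ1^2 * kp * ε2 * ε^2 : ℝ) := by
      rw [hc0, hc1, hc2]; ring
    rw [h]; positivity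
  have h2 : (0:ℝ) ≤ c2 * (c1 * c2 - c0 - 4 * (ε * ε2 * δ1)) := by
    have h : c2 * (c1 * c2 - c0 - 4 * (ε * ε2 * δ1)) = (ε +
      2 * ε^2 +
      ε^3 +
      δ1 * ε2 +
      δ1 * ε2 * ε^3 +
      2 * δ1^2 * ε2^2 +
      2 * δ1^2 * ε2^2 * ε^2 +
      δ1^3 * ε2^3 +
      δ1^3 * ε2^3 * ε +
      6 * kp * ε2 * ε +
      8 * kp * ε2 * ε^2 +
      2 * kp * ε2 * ε^3 +
      4 * kp * δ1 * ε2^2 +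
      6 * kp * δ1 * ε2^2 * ε +
      8 * kp * δ1 * ε2^2 * ε^2 +
      4 * kp * δ1^2 * ε2^3 +
      6 * kp * δ1^2 * ε2^3 * ε +
      12 * kp^2 * ε2^2 * ε +
      8 * kp^2 * ε2^2 * ε^2 +
      4 * kp^2 * δ1 * ε2^3 +
      12 * kp^2 * δ1 * ε2^3 * ε +
      8 * kp^3 * ε2^3 * ε +
      2 * θ * ε * x0 +
      2 * θ * ε^2 * x0 +
      3 * θ * δ1 * ε2 * x0 +
      3 * θ * δ1 * ε2 * ε * x0 +
      3 * θ * δ1 * ε2 * ε^2 * x0 +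
      4 * θ * δ1^2 * ε2^2 * x0 +
      4 * θ * δ1^2 * ε2^2 * ε * x0 +
      θ * δ1^3 * ε2^3 * x0 +
      2 * θ * kp * ε2 * x0 +
      12 * θ * kp * ε2 * ε * x0 +
      6 * θ * kp * ε2 * ε^2 * x0 +
      12 * θ * kp * δ1 * ε2^2 * x0 +
      16 * θ * kp * δ1 * ε2^2 * ε * x0 +
      6 * θ * kp * δ1^2 * ε2^3 * x0 +
      8 * θ * kp^2 * ε2^2 * x0 +
      16 * θ * kp^2 * ε2^2 * ε * x0 +
      12 * θ * kp^2 * δ1 * ε2^3 * x0 +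
      8 * θ * kp^3 * ε2^3 * x0 +
      θ^2 * ε * x0^2 +
      3 * θ^2 * δ1 * ε2 * x0^2 +
      3 * θ^2 * δ1 * ε2 * ε * x0^2 +
      2 * θ^2 * δ1^2 * ε2^2 * x0^2 +
      4 * θ^2 * kp * ε2 * x0^2 +
      6 * θ^2 * kp * ε2 * ε * x0^2 +
      8 * θ^2 * kp * δ1 * ε2^2 * x0^2 +
      8 * θ^2 * kp^2 * ε2^2 * x0^2 +
      θ^3 * δ1 * ε2 * x0^3 +
      2 * θ^3 * kp * ε2 * x0^3 +
      γ1 * ε +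
      4 * γ1 * ε^2 +
      3 * γ1 * ε^3 +
      4 * γ1 * δ1 * ε2 * ε +
      4 * γ1 * δ1 * ε2 * ε^2 +
      3 * γ1 * δ1 * ε2 * ε^3 +
      4 * γ1 * δ1^2 * ε2^2 * ε +
      4 * γ1 * δ1^2 * ε2^2 * ε^2 +
      γ1 * δ1^3 * ε2^3 * ε +
      6 * γ1 * kp * ε2 * ε +
      16 * γ1 * kp * ε2 * ε^2 +
      6 * γ1 * kp * ε2 * ε^3 +
      14 * γ1 * kp * δ1 * ε2^2 * ε +
      16 * γ1 * kp * δ1 * ε2^2 * ε^2 +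
      6 * γ1 * kp * δ1^2 * ε2^3 * ε +
      12 * γ1 * kp^2 * ε2^2 * ε +
      16 * γ1 * kp^2 * ε2^2 * ε^2 +
      12 * γ1 * kp^2 * δ1 * ε2^3 * ε +
      8 * γ1 * kp^3 * ε2^3 * ε +
      2 * γ1 * θ * ε * x0 +
      4 * γ1 * θ * ε^2 * x0 +
      7 * γ1 * θ * δ1 * ε2 * ε * x0 +
      6 * γ1 * θ * δ1 * ε2 * ε^2 * x0 +
      4 * γ1 * θ * δ1^2 * ε2^2 * ε * x0 +
      12 * γ1 * θ * kp * ε2 * ε * x0 +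
      12 * γ1 * θ * kp * ε2 * ε^2 * x0 +
      16 * γ1 * θ * kp * δ1 * ε2^2 * ε * x0 +
      16 * γ1 * θ * kp^2 * ε2^2 * ε * x0 +
      γ1 * θ^2 * ε * x0^2 +
      3 * γ1 * θ^2 * δ1 * ε2 * ε * x0^2 +
      6 * γ1 * θ^2 * kp * ε2 * ε * x0^2 +
      2 * γ1^2 * ε^2 +
      3 * γ1^2 * ε^3 +
      4 * γ1^2 * δ1 * ε2 * ε^2 +
      3 * γ1^2 * δ1 * ε2 * ε^3 +
      2 * γ1^2 * δ1^2 * ε2^2 * ε^2 +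
      8 * γ1^2 * kp * ε2 * ε^2 +
      6 * γ1^2 * kp * ε2 * ε^3 +
      8 * γ1^2 * kp * δ1 * ε2^2 * ε^2 +
      8 * γ1^2 * kp^2 * ε2^2 * ε^2 +
      2 * γ1^2 * θ * ε^2 * x0 +
      3 * γ1^2 * θ * δ1 * ε2 * ε^2 * x0 +
      6 * γ1^2 * θ * kp * ε2 * ε^2 * x0 +
      γ1^3 * ε^3 +
      γ1^3 * δ1 * ε2 * ε^3 +
      2 * γ1^3 * kp * ε2 * ε^3 : ℝ) := by
      rw [hc0, hc1, hc2]; ring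
    rw [h]; positivity
  have h1 : (0:ℝ) ≤ c1 * (c1 * c2 - c0) - 2 * (ε * ε2 * δ1) * c2 ^ 2 := by
    have h : c1 * (c1 * c2 - c0) - 2 * (ε * ε2 * δ1) * c2 ^ 2 = (ε^2 +
      ε^3 +
      δ1^2 * ε2^2 +
      δ1^2 * ε2^2 * ε^3 +
      δ1^3 * ε2^3 +
      δ1^3 * ε2^3 * ε^2 +
      6 * kp * ε2 * ε^2 +
      4 * kp * ε2 * ε^3 +
      6 * kp * δ1 * ε2^2 * ε^2 +
      4 * kp * δ1 * ε2^2 * ε^3 +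
      2 * kp * δ1^2 * ε2^3 +
      6 * kp * δ1^2 * ε2^3 * ε^2 +
      12 * kp^2 * ε2^2 * ε^2 +
      4 * kp^2 * ε2^2 * ε^3 +
      12 * kp^2 * δ1 * ε2^3 * ε^2 +
      8 * kp^3 * ε2^3 * ε^2 +
      θ * ε^2 * x0 +
      3 * θ * δ1^2 * ε2^2 * x0 +
      3 * θ * δ1^2 * ε2^2 * ε * x0 +
      3 * θ * δ1^2 * ε2^2 * ε^2 * x0 +
      2 * θ * δ1^3 * ε2^3 * x0 +
      2 * θ * δ1^3 * ε2^3 * ε * x0 +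
      4 * θ * kp * ε2 * ε * x0 +
      8 * θ * kp * ε2 * ε^2 * x0 +
      4 * θ * kp * δ1 * ε2^2 * x0 +
      14 * θ * kp * δ1 * ε2^2 * ε * x0 +
      12 * θ * kp * δ1 * ε2^2 * ε^2 * x0 +
      8 * θ * kp * δ1^2 * ε2^3 * x0 +
      12 * θ * kp * δ1^2 * ε2^3 * ε * x0 +
      16 * θ * kp^2 * ε2^2 * ε * x0 +
      12 * θ * kp^2 * ε2^2 * ε^2 * x0 +
      8 * θ * kp^2 * δ1 * ε2^3 * x0 +
      24 * θ * kp^2 * δ1 * ε2^3 * ε * x0 +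
      16 * θ * kp^3 * ε2^3 * ε * x0 +
      3 * θ^2 * δ1^2 * ε2^2 * x0^2 +
      3 * θ^2 * δ1^2 * ε2^2 * ε * x0^2 +
      θ^2 * δ1^3 * ε2^3 * x0^2 +
      4 * θ^2 * kp * ε2 * ε * x0^2 +
      8 * θ^2 * kp * δ1 * ε2^2 * x0^2 +
      12 * θ^2 * kp * δ1 * ε2^2 * ε * x0^2 +
      6 * θ^2 * kp * δ1^2 * ε2^3 * x0^2 +
      4 * θ^2 * kp^2 * ε2^2 * x0^2 +
      12 * θ^2 * kp^2 * ε2^2 * ε * x0^2 +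
      12 * θ^2 * kp^2 * δ1 * ε2^3 * x0^2 +
      8 * θ^2 * kp^3 * ε2^3 * x0^2 +
      θ^3 * δ1^2 * ε2^2 * x0^3 +
      4 * θ^3 * kp * δ1 * ε2^2 * x0^3 +
      4 * θ^3 * kp^2 * ε2^2 * x0^3 +
      2 * γ1 * ε^2 +
      3 * γ1 * ε^3 +
      2 * γ1 * δ1 * ε2 * ε +
      4 * γ1 * δ1 * ε2 * ε^2 +
      2 * γ1 * δ1 * ε2 * ε^3 +
      4 * γ1 * δ1^2 * ε2^2 * ε +
      4 * γ1 * δ1^2 * ε2^2 * ε^2 +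
      3 * γ1 * δ1^2 * ε2^2 * ε^3 +
      2 * γ1 * δ1^3 * ε2^3 * ε +
      2 * γ1 * δ1^3 * ε2^3 * ε^2 +
      12 * γ1 * kp * ε2 * ε^2 +
      12 * γ1 * kp * ε2 * ε^3 +
      8 * γ1 * kp * δ1 * ε2^2 * ε +
      20 * γ1 * kp * δ1 * ε2^2 * ε^2 +
      12 * γ1 * kp * δ1 * ε2^2 * ε^3 +
      8 * γ1 * kp * δ1^2 * ε2^3 * ε +
      12 * γ1 * kp * δ1^2 * ε2^3 * ε^2 +
      24 * γ1 * kp^2 * ε2^2 * ε^2 +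
      12 * γ1 * kp^2 * ε2^2 * ε^3 +
      8 * γ1 * kp^2 * δ1 * ε2^3 * ε +
      24 * γ1 * kp^2 * δ1 * ε2^3 * ε^2 +
      16 * γ1 * kp^3 * ε2^3 * ε^2 +
      2 * γ1 * θ * ε^2 * x0 +
      4 * γ1 * θ * δ1 * ε2 * ε * x0 +
      4 * γ1 * θ * δ1 * ε2 * ε^2 * x0 +
      7 * γ1 * θ * δ1^2 * ε2^2 * ε * x0 +
      6 * γ1 * θ * δ1^2 * ε2^2 * ε^2 * x0 +
      2 * γ1 * θ * δ1^3 * ε2^3 * ε * x0 +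
      4 * γ1 * θ * kp * ε2 * ε * x0 +
      16 * γ1 * θ * kp * ε2 * ε^2 * x0 +
      22 * γ1 * θ * kp * δ1 * ε2^2 * ε * x0 +
      24 * γ1 * θ * kp * δ1 * ε2^2 * ε^2 * x0 +
      12 * γ1 * θ * kp * δ1^2 * ε2^3 * ε * x0 +
      16 * γ1 * θ * kp^2 * ε2^2 * ε * x0 +
      24 * γ1 * θ * kp^2 * ε2^2 * ε^2 * x0 +
      24 * γ1 * θ * kp^2 * δ1 * ε2^3 * ε * x0 +
      16 * γ1 * θ * kp^3 * ε2^3 * ε * x0 +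
      2 * γ1 * θ^2 * δ1 * ε2 * ε * x0^2 +
      3 * γ1 * θ^2 * δ1^2 * ε2^2 * ε * x0^2 +
      4 * γ1 * θ^2 * kp * ε2 * ε * x0^2 +
      12 * γ1 * θ^2 * kp * δ1 * ε2^2 * ε * x0^2 +
      12 * γ1 * θ^2 * kp^2 * ε2^2 * ε * x0^2 +
      γ1^2 * ε^2 +
      3 * γ1^2 * ε^3 +
      4 * γ1^2 * δ1 * ε2 * ε^2 +
      4 * γ1^2 * δ1 * ε2 * ε^3 +
      4 * γ1^2 * δ1^2 * ε2^2 * ε^2 +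
      3 * γ1^2 * δ1^2 * ε2^2 * ε^3 +
      γ1^2 * δ1^3 * ε2^3 * ε^2 +
      6 * γ1^2 * kp * ε2 * ε^2 +
      12 * γ1^2 * kp * ε2 * ε^3 +
      14 * γ1^2 * kp * δ1 * ε2^2 * ε^2 +
      12 * γ1^2 * kp * δ1 * ε2^2 * ε^3 +
      6 * γ1^2 * kp * δ1^2 * ε2^3 * ε^2 +
      12 * γ1^2 * kp^2 * ε2^2 * ε^2 +
      12 * γ1^2 * kp^2 * ε2^2 * ε^3 +
      12 * γ1^2 * kp^2 * δ1 * ε2^3 * ε^2 +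
      8 * γ1^2 * kp^3 * ε2^3 * ε^2 +
      γ1^2 * θ * ε^2 * x0 +
      4 * γ1^2 * θ * δ1 * ε2 * ε^2 * x0 +
      3 * γ1^2 * θ * δ1^2 * ε2^2 * ε^2 * x0 +
      8 * γ1^2 * θ * kp * ε2 * ε^2 * x0 +
      12 * γ1^2 * θ * kp * δ1 * ε2^2 * ε^2 * x0 +
      12 * γ1^2 * θ * kp^2 * ε2^2 * ε^2 * x0 +
      γ1^3 * ε^3 +
      2 * γ1^3 * δ1 * ε2 * ε^3 +
      γ1^3 * δ1^2 * ε2^2 * ε^3 +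
      4 * γ1^3 * kp * ε2 * ε^3 +
      4 * γ1^3 * kp * δ1 * ε2^2 * ε^3 +
      4 * γ1^3 * kp^2 * ε2^2 * ε^3 : ℝ) := by
      rw [hc0, hc1, hc2]; ring
    rw [h]; positivity
  have hc0pos : (0:ℝ) < c0 := by rw [hc0]; positivity
  have h0 : (0:ℝ) < (c1 * c2 - c0) * c0 := by
    have hq : (0:ℝ) < 2 * (ε * ε2 * δ1) := by positivity
    nlinarith [h3, hc0pos]
  have hd : (0:ℝ) < ε2 * δ2 := by positivity
  have hkey : a3 * (a1 * a2 - a3) - a1 ^ 2 * a4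
      = (c1 * c2 - c0 - 2 * (ε * ε2 * δ1)) * (ε2 * δ2) ^ 3
        + c2 * (c1 * c2 - c0 - 4 * (ε * ε2 * δ1)) * (ε2 * δ2) ^ 2
        + (c1 * (c1 * c2 - c0) - 2 * (ε * ε2 * δ1) * c2 ^ 2) * (ε2 * δ2)
        + (c1 * c2 - c0) * c0 := by
    rw [ha1, ha2, ha3, ha4]; ring
  rw [hkey]
  have t3 := mul_nonneg h3 (le_of_lt (pow_pos hd 3))
  have t2 := mul_nonneg h2 (le_of_lt (pow_pos hd 2))
  have t1 := mul_nonneg h1 (le_of_lt hd)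
  linarith [t3, t2, t1, h0]
end

section
/- Let γ_1, θ, k, δ_1, δ_2, ε_2 and ε be positive real numbers, set x̄_0 = γ_1/(1+γ_1), and define c_0 = ε ε_2 δ_1 (γ_1+1), c_1 = ε(γ_1+1)(ε_2(2k+δ_1)+1) + ε_2(2kθx̄_0 + δ_1(1+θx̄_0)), c_2 = ε(γ_1+1) + ε_2(2k+δ_1) + θx̄_0 + 1, and a_1 = ε_2δ_2 + c_2, a_2 = ε_2δ_2 c_2 + c_1, a_3 = ε_2δ_2 c_1 + c_0. Then a_1 a_2 − a_3 > 0; in fact a_1 a_2 − a_3 = ε_2δ_2 c_2(ε_2δ_2 + c_2) + c_3(c_0 + c_4) + c_4 where c_3 = ε(γ_1+1) + ε_2(2k+δ_1) + θx̄_0 and c_4 = ε(γ_1+1)(2ε_2 k + 1) + ε_2(2kθx̄_0 + δ_1(1+θx̄_0)), and c_3, c_4 > 0. -/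
/-- The Routh–Hurwitz quantity `a₁a₂ − a₃` for the quartic characteristic
polynomial of the full Hes1 model with one binding site is positive, with the
explicit decomposition `a₁a₂ − a₃ = ε₂δ₂c₂(ε₂δ₂ + c₂) + c₃(c₀ + c₄) + c₄`
where `c₃, c₄ > 0`. -/
theorem stmt_10 (γ1 θ kp δ1 δ2 ε2 ε : ℝ)
    (hγ1 : 0 < γ1) (hθ : 0 < θ) (hkp : 0 < kp) (hδ1 : 0 < δ1) (hδ2 : 0 < δ2)
    (hε2 : 0 < ε2) (hε : 0 < ε)
    (x0 : ℝ) (hx0 : x0 = γ1 / (1 + γ1))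
    (c0 c1 c2 c3 c4 a1 a2 a3 : ℝ)
    (hc0 : c0 = ε * ε2 * δ1 * (γ1 + 1))
    (hc1 : c1 = ε * (γ1 + 1) * (ε2 * (2 * kp + δ1) + 1)
        + ε2 * (2 * kp * θ * x0 + δ1 * (1 + θ * x0)))
    (hc2 : c2 = ε * (γ1 + 1) + ε2 * (2 * kp + δ1) + θ * x0 + 1)
    (hc3 : c3 = ε * (γ1 + 1) + ε2 * (2 * kp + δ1) + θ * x0)
    (hc4 : c4 = ε * (γ1 + 1) * (2 * ε2 * kp + 1)
        + ε2 * (2 * kp * θ * x0 + δ1 * (1 + θ * x0)))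
    (ha1 : a1 = ε2 * δ2 + c2)
    (ha2 : a2 = ε2 * δ2 * c2 + c1)
    (ha3 : a3 = ε2 * δ2 * c1 + c0) :
    a1 * a2 - a3 > 0 ∧
    a1 * a2 - a3 = ε2 * δ2 * c2 * (ε2 * δ2 + c2) + c3 * (c0 + c4) + c4 ∧
    0 < c3 ∧ 0 < c4 := by
  have hx0pos : 0 < x0 := by
    rw [hx0]; positivity
  have hc0pos : 0 < c0 := by rw [hc0]; positivity
  have hc2pos : 0 < c2 := by rw [hc2]; positivity
  have hc3pos : 0 < c3 := by rw [hc3]; positivity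
  have hc4pos : 0 < c4 := by rw [hc4]; positivity
  have heq : a1 * a2 - a3 = ε2 * δ2 * c2 * (ε2 * δ2 + c2) + c3 * (c0 + c4) + c4 := by
    subst ha1 ha2 ha3 hc0 hc1 hc2 hc3 hc4; ring
  refine ⟨?_, heq, hc3pos, hc4pos⟩
  rw [heq]; positivity
end

section
/- Let γ_1, θ, k, δ_1, δ_2, ε_1 be positive real numbers, set η = (1+γ_1)/(1+γ_1(1+θ)), and define a_1 = δ_1 + δ_2 + η(1+γ_1)/ε_1 + 2kηθγ_1/(1+γ_1), a_2 = η(δ_1+δ_2)(1+γ_1)/ε_1 + 2kηθδ_2 γ_1/(1+γ_1) + δ_1δ_2, a_3 = ηδ_1δ_2(3+γ_1)/ε_1. Then every complex root λ of the polynomial W(λ) = λ³ + a_1λ² + a_2λ + a_3 satisfies Re(λ) < 0. -/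
/-- Routh–Hurwitz criterion for a monic real cubic: if all coefficients are
positive and `a3 < a1 * a2`, every complex root has negative real part. -/
lemma cubic_rh (a1 a2 a3 : ℝ) (h1 : 0 < a1) (h2 : 0 < a2) (h3 : 0 < a3)
    (h4 : a3 < a1 * a2) :
    ∀ lam : ℂ, lam ^ 3 + (a1 : ℂ) * lam ^ 2 + (a2 : ℂ) * lam + (a3 : ℂ) = 0 →
      lam.re < 0 := by
  intro lam h
  rw [Complex.ext_iff] at h
  simp only [Complex.add_re, Complex.add_im, Complex.mul_re, Complex.mul_im,
    Complex.ofReal_re, Complex.ofReal_im, Complex.zero_re, Complex.zero_im,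
    pow_succ, pow_zero, one_mul, Complex.one_re, Complex.one_im] at h
  obtain ⟨hre, him⟩ := h
  set x := lam.re
  set y := lam.im
  by_contra hc
  push_neg at hc
  rcases eq_or_ne y 0 with h0 | h0
  · rw [h0] at hre
    nlinarith [hre]
  · have hy2 : y ^ 2 = 3 * x ^ 2 + 2 * a1 * x + a2 := by
      have h' : y * (3 * x ^ 2 - y ^ 2 + 2 * a1 * x + a2) = 0 := by nlinarith [him]
      rcases mul_eq_zero.mp h' with h | h
      · exact absurd h h0
      · nlinarith [h]
    nlinarith [hre, hy2, mul_nonneg hc h1.le, sq_nonneg x,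
      mul_nonneg (mul_nonneg hc hc) hc, mul_nonneg hc (mul_nonneg hc h1.le)]

/-- Every complex root of the cubic characteristic polynomial `W` of the
Jacobian of the reduced Hes1 model without dimers (one binding site) at its
positive steady state has negative real part. -/
theorem stmt_11 (γ1 θ kp δ1 δ2 ε1 : ℝ)
    (hγ1 : 0 < γ1) (hθ : 0 < θ) (hkp : 0 < kp) (hδ1 : 0 < δ1) (hδ2 : 0 < δ2)
    (hε1 : 0 < ε1)
    (η : ℝ) (hη : η = (1 + γ1) / (1 + γ1 * (1 + θ)))
    (a1 a2 a3 : ℝ)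
    (ha1 : a1 = δ1 + δ2 + η * (1 + γ1) / ε1 + 2 * kp * η * θ * γ1 / (1 + γ1))
    (ha2 : a2 = η * (δ1 + δ2) * (1 + γ1) / ε1
        + 2 * kp * η * θ * δ2 * γ1 / (1 + γ1) + δ1 * δ2)
    (ha3 : a3 = η * δ1 * δ2 * (3 + γ1) / ε1) :
    ∀ lam : ℂ, lam ^ 3 + (a1 : ℂ) * lam ^ 2 + (a2 : ℂ) * lam + (a3 : ℂ) = 0 →
      lam.re < 0 := by
  have hγ1' : (0:ℝ) < 1 + γ1 := by linarith
  have hηpos : 0 < η := by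
    rw [hη]; positivity
  set A := η * (1 + γ1) / ε1 with hA
  set B := 2 * kp * η * θ * γ1 / (1 + γ1) with hB
  have hApos : 0 < A := by rw [hA]; positivity
  have hBpos : 0 < B := by rw [hB]; positivity
  have ha1' : a1 = δ1 + δ2 + A + B := by rw [ha1]
  have ha2' : a2 = A * (δ1 + δ2) + B * δ2 + δ1 * δ2 := by
    rw [ha2, hA, hB]; ring
  have ha3le : a3 ≤ 3 * A * δ1 * δ2 := by
    have h : 3 * A * δ1 * δ2 - a3 = 2 * η * δ1 * δ2 * γ1 / ε1 := by
      rw [ha3, hA]; ring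
    have : 0 < 2 * η * δ1 * δ2 * γ1 / ε1 := by positivity
    linarith
  have h1 : 0 < a1 := by rw [ha1']; positivity
  have h2 : 0 < a2 := by rw [ha2']; positivity
  have h3 : 0 < a3 := by rw [ha3]; positivity
  have h4 : a3 < a1 * a2 := by
    have key : 3 * A * δ1 * δ2 < a1 * a2 := by
      rw [ha1', ha2']
      nlinarith [sq_nonneg (δ1 - δ2), mul_pos hδ1 hδ2, mul_pos hApos hBpos,
        mul_pos hApos (mul_pos hδ1 hδ2), mul_pos hBpos (mul_pos hδ1 hδ2),
        mul_pos hApos hApos, mul_pos hApos hδ2, mul_pos hBpos hδ2,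
        mul_pos hApos (mul_pos hδ1 hδ1), mul_pos hApos (mul_pos hδ2 hδ2)]
    linarith
  exact cubic_rh a1 a2 a3 h1 h2 h3 h4
end

section
/- Let γ_1, θ, k, δ_1, δ_2, ε_1 be positive real numbers, set η = (1+γ_1)/(1+γ_1(1+θ)), and define a_1 = δ_1 + δ_2 + η(1+γ_1)/ε_1 + 2kηθγ_1/(1+γ_1), a_2 = η(δ_1+δ_2)(1+γ_1)/ε_1 + 2kηθδ_2 γ_1/(1+γ_1) + δ_1δ_2, a_3 = ηδ_1δ_2(3+γ_1)/ε_1. Then a_1 a_2 > a_3. -/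
/-- The Routh–Hurwitz inequality `a₁a₂ > a₃` for the cubic characteristic
polynomial of the reduced Hes1 model without dimers (one binding site) at its
positive steady state. -/
theorem stmt_12 (γ1 θ kp δ1 δ2 ε1 : ℝ)
    (hγ1 : 0 < γ1) (hθ : 0 < θ) (hkp : 0 < kp) (hδ1 : 0 < δ1) (hδ2 : 0 < δ2)
    (hε1 : 0 < ε1)
    (η : ℝ) (hη : η = (1 + γ1) / (1 + γ1 * (1 + θ)))
    (a1 a2 a3 : ℝ)
    (ha1 : a1 = δ1 + δ2 + η * (1 + γ1) / ε1 + 2 * kp * η * θ * γ1 / (1 + γ1))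
    (ha2 : a2 = η * (δ1 + δ2) * (1 + γ1) / ε1
        + 2 * kp * η * θ * δ2 * γ1 / (1 + γ1) + δ1 * δ2)
    (ha3 : a3 = η * δ1 * δ2 * (3 + γ1) / ε1) :
    a1 * a2 > a3 := by
  have hηpos : 0 < η := by
    rw [hη]; positivity
  set A := η * (1 + γ1) / ε1 with hA
  set B := 2 * kp * η * θ * γ1 / (1 + γ1) with hB
  have hApos : 0 < A := by rw [hA]; positivity
  have hBpos : 0 < B := by rw [hB]; positivity
  have hγ1' : (1 : ℝ) + γ1 ≠ 0 := by positivity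
  have h2 : a2 = A * (δ1 + δ2) + B * δ2 + δ1 * δ2 := by
    rw [ha2, hA, hB]; field_simp
  have h3 : a3 < 3 * A * δ1 * δ2 := by
    rw [ha3, hA]
    rw [div_lt_iff₀ hε1] at *
    have : 3 * (η * (1 + γ1) / ε1) * δ1 * δ2 * ε1 = 3 * (η * (1 + γ1)) * δ1 * δ2 := by
      field_simp
    rw [this]
    nlinarith [mul_pos (mul_pos hηpos hδ1) hδ2]
  have hkey : 3 * A * δ1 * δ2 ≤ a1 * a2 := by
    rw [ha1, h2]
    nlinarith [sq_nonneg (δ1 - δ2), mul_pos hApos (mul_pos hδ1 hδ2),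
      mul_pos hBpos hδ2, mul_pos hδ1 hδ2, mul_pos hApos hBpos,
      mul_pos hApos hApos, mul_pos (mul_pos hBpos hδ2) (add_pos hδ1 hδ2),
      mul_nonneg (mul_nonneg hApos.le (add_pos hδ1 hδ2).le) (sq_nonneg (δ1 - δ2))]
  linarith
end

section
/- Let k, δ_1, δ_2, ε_2, r_0 be positive real numbers, let p < 0 be a real number with −p < ((ε_2(2k+δ_1)+1)·(ε_2δ_2(2k+δ_1+δ_2)+δ_1+δ_2)) / (2ε_2 r_0 δ_1 δ_2), and set A = 2k + δ_1. Then every complex root λ of the polynomial W(λ) = λ³ + (A + δ_2 + 1/ε_2)λ² + (δ_1/ε_2 + δ_2(A + 1/ε_2))λ + (δ_1δ_2/ε_2)(1 − 2 r_0 p) satisfies Re(λ) < 0. -/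
lemma cubic_hurwitz (a b c : ℝ) (ha : 0 < a) (hb : 0 < b) (hc : 0 < c) (hab : c < a*b)
    (z : ℂ) (h : z^3 + (a:ℂ)*z^2 + (b:ℂ)*z + (c:ℂ) = 0) : z.re < 0 := by
  by_contra hx
  push_neg at hx
  rw [Complex.ext_iff] at h
  obtain ⟨hre, him⟩ := h
  simp [pow_succ, Complex.mul_re, Complex.mul_im] at hre him
  set x := z.re
  set y := z.im
  have hfac : y * (3*x^2 - y^2 + 2*a*x + b) = 0 := by linear_combination him
  rcases mul_eq_zero.mp hfac with hy | hy
  · rw [hy] at hre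
    nlinarith [sq_nonneg x, mul_nonneg (mul_nonneg hx hx) hx, mul_nonneg (mul_nonneg ha.le hx) hx, mul_nonneg hb.le hx]
  · -- y^2 = 3x^2 + 2ax + b
    have hy2 : y^2 = 3*x^2 + 2*a*x + b := by linarith
    nlinarith [mul_nonneg (mul_nonneg hx hx) hx, sq_nonneg x, mul_nonneg ha.le hx,
      mul_nonneg (mul_nonneg ha.le hx) hx, mul_nonneg hb.le hx,
      mul_nonneg (mul_nonneg ha.le ha.le) hx]

/-- Conditional stability of the positive steady state of the reduced Hes1
model with dimers: under the stability condition on `−p = −ψ'(1)`, every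
complex root of the cubic characteristic polynomial has negative real part. -/
theorem stmt_13 (kp δ1 δ2 ε2 r0 : ℝ)
    (hkp : 0 < kp) (hδ1 : 0 < δ1) (hδ2 : 0 < δ2) (hε2 : 0 < ε2) (hr0 : 0 < r0)
    (p : ℝ) (hp : p < 0)
    (hstab : -p < ((ε2 * (2 * kp + δ1) + 1) * (ε2 * δ2 * (2 * kp + δ1 + δ2) + δ1 + δ2))
        / (2 * ε2 * r0 * δ1 * δ2))
    (A : ℝ) (hA : A = 2 * kp + δ1) :
    ∀ lam : ℂ, lam ^ 3 + ((A + δ2 + 1 / ε2 : ℝ) : ℂ) * lam ^ 2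
        + ((δ1 / ε2 + δ2 * (A + 1 / ε2) : ℝ) : ℂ) * lam
        + ((δ1 * δ2 / ε2 * (1 - 2 * r0 * p) : ℝ) : ℂ) = 0 → lam.re < 0 := by
  intro lam hlam
  subst hA
  have hden : 0 < 2 * ε2 * r0 * δ1 * δ2 := by positivity
  have key := (lt_div_iff₀ hden).mp hstab
  apply cubic_hurwitz _ _ _ _ _ _ _ lam hlam
  · positivity
  · positivity
  · have : 0 < 1 - 2 * r0 * p := by nlinarith
    positivity
  · have hident : (2*kp+δ1+δ2+1/ε2) * (δ1/ε2+δ2*(2*kp+δ1+1/ε2)) * ε2^2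
        = ε2*δ1*δ2 + (ε2*(2*kp+δ1)+1)*(ε2*δ2*(2*kp+δ1+δ2)+δ1+δ2) := by
      field_simp
      ring
    have hident2 : δ1*δ2/ε2*(1-2*r0*p) * ε2^2 = ε2*δ1*δ2 + (-p*(2*ε2*r0*δ1*δ2)) := by
      field_simp
      ring
    have hmul : δ1*δ2/ε2*(1-2*r0*p) * ε2^2
        < (2*kp+δ1+δ2+1/ε2) * (δ1/ε2+δ2*(2*kp+δ1+1/ε2)) * ε2^2 := by
      rw [hident, hident2]
      linarith
    exact lt_of_mul_lt_mul_right hmul (by positivity)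
end

section
/- Let k, δ_1, δ_2, ε_2, r_0 be positive real numbers, let p < 0 be a real number with −p > ((ε_2(2k+δ_1)+1)·(ε_2δ_2(2k+δ_1+δ_2)+δ_1+δ_2)) / (2ε_2 r_0 δ_1 δ_2), and set A = 2k + δ_1. Then the polynomial W(λ) = λ³ + (A + δ_2 + 1/ε_2)λ² + (δ_1/ε_2 + δ_2(A + 1/ε_2))λ + (δ_1δ_2/ε_2)(1 − 2 r_0 p) has a complex root λ with Re(λ) > 0. -/
/-- A monic real quadratic with negative linear coefficient has a complex
root with positive real part. -/
lemma quad_root_pos (s t : ℝ) (hs : s < 0) :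
    ∃ z : ℂ, z ^ 2 + (s : ℂ) * z + (t : ℂ) = 0 ∧ 0 < z.re := by
  by_cases hd : 0 ≤ s ^ 2 - 4 * t
  · refine ⟨(((-s + Real.sqrt (s ^ 2 - 4 * t)) / 2 : ℝ) : ℂ), ?_, ?_⟩
    · have h := Real.sq_sqrt hd
      have hC : ((Real.sqrt (s ^ 2 - 4 * t) : ℝ) : ℂ) ^ 2 = (s : ℂ) ^ 2 - 4 * t := by
        exact_mod_cast h
      push_cast
      linear_combination hC / 4
    · simp only [Complex.ofReal_re]
      have := Real.sqrt_nonneg (s ^ 2 - 4 * t)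
      linarith
  · push_neg at hd
    set u := Real.sqrt (4 * t - s ^ 2) with hu_def
    have hu : ((u : ℂ)) ^ 2 = 4 * (t : ℂ) - (s : ℂ) ^ 2 := by
      have : u ^ 2 = 4 * t - s ^ 2 := Real.sq_sqrt (by linarith)
      exact_mod_cast this
    refine ⟨((-s / 2 : ℝ) : ℂ) + ((u / 2 : ℝ) : ℂ) * Complex.I, ?_, ?_⟩
    · push_cast
      linear_combination ((u:ℂ) ^ 2 / 4) * Complex.I_sq - (1 / 4 : ℂ) * hu
    · simp only [Complex.add_re, Complex.ofReal_re, Complex.mul_re, Complex.I_re,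
        Complex.ofReal_im, Complex.I_im]
      ring_nf
      linarith

/-- Instability criterion for a monic real cubic: if all coefficients are
positive but the Routh-Hurwitz inequality is reversed, there is a root with
positive real part. -/
lemma cubic_root_pos (a b c : ℝ) (ha : 0 < a) (hb : 0 < b) (hc : 0 < c)
    (hab : a * b < c) :
    ∃ lam : ℂ, lam ^ 3 + (a : ℂ) * lam ^ 2 + (b : ℂ) * lam + (c : ℂ) = 0 ∧ 0 < lam.re := by
  set M : ℝ := a + b + c + 1 with hM_def
  have hM1 : 1 < M := by linarith
  have hMa : a < M := by linarith
  set f : ℝ → ℝ := fun x => x ^ 3 + a * x ^ 2 + b * x + c with hf_def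
  have hcont : ContinuousOn f (Set.Icc (-M) (-a)) := by
    apply Continuous.continuousOn; continuity
  have hfM : f (-M) < 0 := by
    simp only [hf_def]
    nlinarith [sq_nonneg M, sq_nonneg (M - 1), mul_pos hb hc, mul_pos ha hb]
  have hfa : 0 < f (-a) := by
    simp only [hf_def]; nlinarith
  obtain ⟨r, hr_mem, hfr⟩ := intermediate_value_Icc (by linarith : -M ≤ -a) hcont
    ⟨le_of_lt hfM, le_of_lt hfa⟩
  have hfr : f r = 0 := hfr
  have hrne : r ≠ -a := by
    intro h; rw [h] at hfr; linarith
  have hrlt : r < -a := lt_of_le_of_ne hr_mem.2 hrne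
  have hfr' : r ^ 3 + a * r ^ 2 + b * r + c = 0 := hfr
  obtain ⟨lam, hq, hre⟩ := quad_root_pos (a + r) (b + a * r + r ^ 2) (by linarith)
  refine ⟨lam, ?_, hre⟩
  have h3 : (r : ℝ) * (b + a * r + r ^ 2) = -c := by linear_combination hfr'
  have h3' : (r : ℂ) * ((b : ℂ) + (a : ℂ) * r + (r : ℂ) ^ 2) = -(c : ℂ) := by
    exact_mod_cast h3
  push_cast at hq
  linear_combination (lam - (r : ℂ)) * hq + h3'

/-- Instability of the positive steady state of the reduced Hes1 model with
dimers: when the stability inequality is strictly reversed, the cubic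
characteristic polynomial has a root with positive real part. -/
theorem stmt_14 (kp δ1 δ2 ε2 r0 : ℝ)
    (hkp : 0 < kp) (hδ1 : 0 < δ1) (hδ2 : 0 < δ2) (hε2 : 0 < ε2) (hr0 : 0 < r0)
    (p : ℝ) (hp : p < 0)
    (hunstab : -p > ((ε2 * (2 * kp + δ1) + 1) * (ε2 * δ2 * (2 * kp + δ1 + δ2) + δ1 + δ2))
        / (2 * ε2 * r0 * δ1 * δ2))
    (A : ℝ) (hA : A = 2 * kp + δ1) :
    ∃ lam : ℂ, lam ^ 3 + ((A + δ2 + 1 / ε2 : ℝ) : ℂ) * lam ^ 2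
        + ((δ1 / ε2 + δ2 * (A + 1 / ε2) : ℝ) : ℂ) * lam
        + ((δ1 * δ2 / ε2 * (1 - 2 * r0 * p) : ℝ) : ℂ) = 0 ∧ 0 < lam.re := by

  have hden : 0 < 2 * ε2 * r0 * δ1 * δ2 := by positivity
  rw [gt_iff_lt, div_lt_iff₀ hden] at hunstab
  apply cubic_root_pos
  · rw [hA]; positivity
  · rw [hA]; positivity
  · have : 0 < 1 - 2 * r0 * p := by nlinarith
    positivity
  · rw [hA]
    have hε2' : ε2 ≠ 0 := ne_of_gt hε2
    rw [show (2 * kp + δ1 + δ2 + 1 / ε2) * (δ1 / ε2 + δ2 * (2 * kp + δ1 + 1 / ε2)) =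
      ((ε2 * (2 * kp + δ1) + ε2 * δ2 + 1) * (δ1 + ε2 * δ2 * (2 * kp + δ1) + δ2)) / ε2 ^ 2 by
        field_simp; ring,
      show δ1 * δ2 / ε2 * (1 - 2 * r0 * p) = (ε2 * δ1 * δ2 * (1 - 2 * r0 * p)) / ε2 ^ 2 by
        field_simp]
    rw [div_lt_div_iff₀ (by positivity) (by positivity)]
    nlinarith [hunstab, mul_pos hε2 hε2, sq_nonneg ε2]
end

section
/- Let k ≥ 0 and ε_2, δ_1, δ_2 > 0 be real numbers. Then ((ε_2(2k+δ_1)+1)·(ε_2δ_2(2k+δ_1+δ_2)+δ_1+δ_2)) / (2ε_2 δ_1 δ_2) ≥ (δ_1+δ_2)²/(2δ_1δ_2) + (1/(ε_2δ_1) + ε_2δ_1)/2 + (1/(ε_2δ_2) + ε_2δ_2)/2 ≥ 4, and the inequality is strict whenever k > 0. -/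
/-- The key estimate: the stability threshold quantity is bounded below by a
symmetric expression which is at least `4`; the first inequality is strict
whenever `k > 0`. -/
theorem stmt_16 (k ε2 δ1 δ2 : ℝ)
    (hk : 0 ≤ k) (hε2 : 0 < ε2) (hδ1 : 0 < δ1) (hδ2 : 0 < δ2) :
    ((ε2 * (2 * k + δ1) + 1) * (ε2 * δ2 * (2 * k + δ1 + δ2) + δ1 + δ2))
        / (2 * ε2 * δ1 * δ2)
      ≥ (δ1 + δ2) ^ 2 / (2 * δ1 * δ2)
        + (1 / (ε2 * δ1) + ε2 * δ1) / 2 + (1 / (ε2 * δ2) + ε2 * δ2) / 2 ∧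
    (δ1 + δ2) ^ 2 / (2 * δ1 * δ2)
        + (1 / (ε2 * δ1) + ε2 * δ1) / 2 + (1 / (ε2 * δ2) + ε2 * δ2) / 2 ≥ 4 ∧
    (0 < k →
      ((ε2 * (2 * k + δ1) + 1) * (ε2 * δ2 * (2 * k + δ1 + δ2) + δ1 + δ2))
          / (2 * ε2 * δ1 * δ2)
        > (δ1 + δ2) ^ 2 / (2 * δ1 * δ2)
          + (1 / (ε2 * δ1) + ε2 * δ1) / 2 + (1 / (ε2 * δ2) + ε2 * δ2) / 2) := by
  refine ⟨?_, ?_, fun hk' => ?_⟩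
  · rw [ge_iff_le, ← sub_nonneg]
    have key : ((ε2 * (2 * k + δ1) + 1) * (ε2 * δ2 * (2 * k + δ1 + δ2) + δ1 + δ2))
        / (2 * ε2 * δ1 * δ2)
      - ((δ1 + δ2) ^ 2 / (2 * δ1 * δ2)
        + (1 / (ε2 * δ1) + ε2 * δ1) / 2 + (1 / (ε2 * δ2) + ε2 * δ2) / 2)
      = k * (4 * k * ε2 ^ 2 * δ2 + 4 * ε2 ^ 2 * δ1 * δ2 + 2 * ε2 ^ 2 * δ2 ^ 2
          + 2 * ε2 * δ1 + 4 * ε2 * δ2) / (2 * ε2 * δ1 * δ2) := by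
      field_simp
      ring
    rw [key]
    positivity
  · have h1 : (δ1 + δ2) ^ 2 / (2 * δ1 * δ2) ≥ 2 := by
      rw [ge_iff_le, le_div_iff₀ (by positivity)]
      nlinarith [sq_nonneg (δ1 - δ2)]
    have h2 : (1 / (ε2 * δ1) + ε2 * δ1) / 2 ≥ 1 := by
      rw [ge_iff_le, le_div_iff₀ (by norm_num : (0:ℝ) < 2), div_add' _ _ _ (by positivity), le_div_iff₀ (by positivity)]
      nlinarith [sq_nonneg (ε2 * δ1 - 1)]
    have h3 : (1 / (ε2 * δ2) + ε2 * δ2) / 2 ≥ 1 := by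
      rw [ge_iff_le, le_div_iff₀ (by norm_num : (0:ℝ) < 2), div_add' _ _ _ (by positivity), le_div_iff₀ (by positivity)]
      nlinarith [sq_nonneg (ε2 * δ2 - 1)]
    linarith
  · rw [gt_iff_lt, ← sub_pos]
    have key : ((ε2 * (2 * k + δ1) + 1) * (ε2 * δ2 * (2 * k + δ1 + δ2) + δ1 + δ2))
        / (2 * ε2 * δ1 * δ2)
      - ((δ1 + δ2) ^ 2 / (2 * δ1 * δ2)
        + (1 / (ε2 * δ1) + ε2 * δ1) / 2 + (1 / (ε2 * δ2) + ε2 * δ2) / 2)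
      = k * (4 * k * ε2 ^ 2 * δ2 + 4 * ε2 ^ 2 * δ1 * δ2 + 2 * ε2 ^ 2 * δ2 ^ 2
          + 2 * ε2 * δ1 + 4 * ε2 * δ2) / (2 * ε2 * δ1 * δ2) := by
      field_simp
      ring
    rw [key]
    positivity
end

section
/- Let n be an integer with 1 ≤ n ≤ 4, let q be a real polynomial of degree at most n with all coefficients nonnegative, q(0) = 0 and q(1) > 0, set r_0 = 1 + q(1) and ψ(y) = 1/(1+q(y)), and let k, ε_2, δ_1, δ_2 be positive reals. Then −ψ'(1) < ((ε_2(2k+δ_1)+1)·(ε_2δ_2(2k+δ_1+δ_2)+δ_1+δ_2)) / (2ε_2 r_0 δ_1 δ_2). -/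
/-- For at most 4 binding sites the stability condition of the positive
steady state of the reduced Hes1 model with dimers holds for all parameter
values: `−ψ'(1)` is strictly below the stability threshold. -/
theorem stmt_17 (n : ℕ) (hn1 : 1 ≤ n) (hn4 : n ≤ 4) (q : Polynomial ℝ)
    (hdeg : q.natDegree ≤ n) (hcoeff : ∀ i, 0 ≤ q.coeff i)
    (h0 : q.eval 0 = 0) (h1 : 0 < q.eval 1)
    (r0 : ℝ) (hr0 : r0 = 1 + q.eval 1)
    (k ε2 δ1 δ2 : ℝ)
    (hk : 0 < k) (hε2 : 0 < ε2) (hδ1 : 0 < δ1) (hδ2 : 0 < δ2) :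
    -(deriv (fun y : ℝ => 1 / (1 + q.eval y)) 1)
      < ((ε2 * (2 * k + δ1) + 1) * (ε2 * δ2 * (2 * k + δ1 + δ2) + δ1 + δ2))
          / (2 * ε2 * r0 * δ1 * δ2) := by
  have hq1 : (0:ℝ) < 1 + q.eval 1 := by linarith
  -- compute the derivative
  have hd : HasDerivAt (fun y : ℝ => 1 / (1 + q.eval y))
      (-(q.derivative.eval 1) / (1 + q.eval 1) ^ 2) 1 := by
    have h := ((q.hasDerivAt 1).const_add 1).inv (ne_of_gt hq1)
    simp only [one_div]; exact h
  have hderiv : deriv (fun y : ℝ => 1 / (1 + q.eval y)) 1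
      = -(q.derivative.eval 1) / (1 + q.eval 1) ^ 2 := hd.deriv
  -- coefficient facts
  have hc0 : q.coeff 0 = 0 := by
    rw [Polynomial.coeff_zero_eq_eval_zero, h0]
  have hdeg5 : q.natDegree < 5 := by omega
  have hQ : q.eval 1 = q.coeff 0 + q.coeff 1 + q.coeff 2 + q.coeff 3 + q.coeff 4 := by
    rw [Polynomial.eval_eq_sum_range' hdeg5]
    simp [Finset.sum_range_succ]
  have hdeg5' : q.derivative.natDegree < 5 :=
    lt_of_le_of_lt (Polynomial.natDegree_derivative_le q) (by omega)
  have hD : q.derivative.eval 1 =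
      q.coeff 1 + q.coeff 2 * 2 + q.coeff 3 * 3 + q.coeff 4 * 4 := by
    have hc5 : q.coeff 5 = 0 := Polynomial.coeff_eq_zero_of_natDegree_lt hdeg5
    rw [Polynomial.eval_eq_sum_range' hdeg5']
    simp [Finset.sum_range_succ, Polynomial.coeff_derivative, hc5]
    norm_num
  set D := q.derivative.eval 1 with hDdef
  have hr1 : 1 < r0 := by rw [hr0]; linarith
  have hDlt : D < 4 * r0 := by
    have h1c := hcoeff 1; have h2c := hcoeff 2
    have h3c := hcoeff 3; have h4c := hcoeff 4
    rw [hD, hr0, hQ, hc0]; linarith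
  have hDnn : 0 ≤ D := by
    have h1c := hcoeff 1; have h2c := hcoeff 2
    have h3c := hcoeff 3; have h4c := hcoeff 4
    rw [hD]; linarith
  set N := (ε2 * (2 * k + δ1) + 1) * (ε2 * δ2 * (2 * k + δ1 + δ2) + δ1 + δ2) with hNdef
  have hN : 8 * ε2 * δ1 * δ2 ≤ N := by
    nlinarith [mul_nonneg hδ2.le (sq_nonneg (ε2 * δ1 - 1)),
      mul_nonneg hδ1.le (sq_nonneg (ε2 * δ2 - 1)),
      mul_nonneg hε2.le (sq_nonneg (δ1 - δ2)),
      mul_pos hε2 hk, mul_pos (mul_pos hε2 hk) hδ1,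
      mul_pos (mul_pos hε2 hδ2) hk,
      mul_pos (mul_pos (mul_pos hε2 hε2) hδ2) hk,
      mul_pos hδ1 hδ2, mul_pos hk hδ2]
  rw [hderiv, hr0] at *
  rw [neg_div, neg_neg]
  have hr0pos : (0:ℝ) < 1 + q.eval 1 := hq1
  rw [div_lt_div_iff₀ (by positivity) (by positivity)]
  nlinarith [mul_pos (mul_pos hε2 hδ1) hδ2, mul_pos hr0pos hr0pos,
    mul_lt_mul_of_pos_right hDlt (mul_pos (mul_pos (mul_pos hε2 hδ1) hδ2) hr0pos),
    mul_le_mul_of_nonneg_right hN (mul_nonneg hr0pos.le hr0pos.le)]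
end

section
/- Let n ≥ 5 be an integer, let r_0 > n/(n−4), set ψ(y) = 1/(1 + (r_0 − 1)·y^n), and set δ_1 = δ_2 = ε_2 = 1. Then there exists k_0 > 0 such that for every k with 0 < k < k_0 one has −ψ'(1) > ((ε_2(2k+δ_1)+1)·(ε_2δ_2(2k+δ_1+δ_2)+δ_1+δ_2)) / (2ε_2 r_0 δ_1 δ_2), i.e. −n(r_0−1)/r_0² exceeds in absolute value the stability threshold ((2k+2)(2k+4))/(2r_0). -/
/-- For `n ≥ 5` binding sites and `r₀ > n/(n−4)`, with
`ψ(y) = 1/(1+(r₀−1)y^n)` and `δ₁ = δ₂ = ε₂ = 1`, the instability condition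
holds for all sufficiently small `k > 0`: `−ψ'(1)` exceeds the stability
threshold, i.e. `n(r₀−1)/r₀² > (2k+2)(2k+4)/(2r₀)`. -/
theorem stmt_18 (n : ℕ) (hn : 5 ≤ n) (r0 : ℝ)
    (hr0 : r0 > (n : ℝ) / ((n : ℝ) - 4))
    (δ1 δ2 ε2 : ℝ) (hδ1 : δ1 = 1) (hδ2 : δ2 = 1) (hε2 : ε2 = 1) :
    ∃ k0 : ℝ, 0 < k0 ∧ ∀ k : ℝ, 0 < k → k < k0 →
      -(deriv (fun y : ℝ => 1 / (1 + (r0 - 1) * y ^ n)) 1)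
        > ((ε2 * (2 * k + δ1) + 1) * (ε2 * δ2 * (2 * k + δ1 + δ2) + δ1 + δ2))
            / (2 * ε2 * r0 * δ1 * δ2) ∧
      (n : ℝ) * (r0 - 1) / r0 ^ 2 > ((2 * k + 2) * (2 * k + 4)) / (2 * r0) := by
  subst hδ1 hδ2 hε2
  have hn4 : (4 : ℝ) < (n : ℝ) := by exact_mod_cast (by omega : 4 < n)
  have hsub : (0 : ℝ) < (n : ℝ) - 4 := by linarith
  have h1 : (1 : ℝ) < (n : ℝ) / ((n : ℝ) - 4) := by
    rw [lt_div_iff₀ hsub]; linarith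
  have hr1 : (1 : ℝ) < r0 := lt_trans h1 hr0
  have hr0pos : (0 : ℝ) < r0 := by linarith
  -- key inequality: n*(r0-1) > 4*r0
  have hA : 4 * r0 < (n : ℝ) * (r0 - 1) := by
    have := (div_lt_iff₀ hsub).mp hr0
    nlinarith
  -- derivative computation
  have hg : HasDerivAt (fun y : ℝ => 1 + (r0 - 1) * y ^ n)
      ((r0 - 1) * ((n : ℝ) * 1 ^ (n - 1))) 1 := by
    simpa using ((hasDerivAt_pow n 1).const_mul (r0 - 1)).const_add 1
  have hg1 : (1 : ℝ) + (r0 - 1) * 1 ^ n = r0 := by simp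
  have hd : HasDerivAt (fun y : ℝ => 1 / (1 + (r0 - 1) * y ^ n))
      ((0 * (1 + (r0 - 1) * 1 ^ n) - 1 * ((r0 - 1) * ((n : ℝ) * 1 ^ (n - 1))))
        / (1 + (r0 - 1) * 1 ^ n) ^ 2) 1 :=
    (hasDerivAt_const 1 1).div hg (by rw [hg1]; linarith)
  have hderiv : deriv (fun y : ℝ => 1 / (1 + (r0 - 1) * y ^ n)) 1
      = -((r0 - 1) * n) / r0 ^ 2 := by
    rw [hd.deriv, hg1]; ring_nf
  refine ⟨min 1 (((n : ℝ) * (r0 - 1) - 4 * r0) / (8 * r0)), ?_, ?_⟩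
  · exact lt_min one_pos (div_pos (by linarith) (by linarith))
  · intro k hk hkk
    have hk1 : k < 1 := lt_of_lt_of_le hkk (min_le_left _ _)
    have hk2 : 8 * r0 * k < (n : ℝ) * (r0 - 1) - 4 * r0 := by
      have := lt_of_lt_of_le hkk (min_le_right _ _)
      calc 8 * r0 * k = k * (8 * r0) := by ring
        _ < (n : ℝ) * (r0 - 1) - 4 * r0 :=
          (lt_div_iff₀ (by linarith)).mp this
    have key : (n : ℝ) * (r0 - 1) / r0 ^ 2 > (2 * k + 2) * (2 * k + 4) / (2 * r0) := by
      rw [gt_iff_lt, div_lt_div_iff₀ (by linarith) (by positivity)]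
      nlinarith [mul_pos hr0pos hk, mul_pos hr0pos (mul_pos hk (sub_pos.2 hk1)),
        sq_nonneg k]
    constructor
    · rw [hderiv]
      have : -(-((r0 - 1) * n) / r0 ^ 2) = (n : ℝ) * (r0 - 1) / r0 ^ 2 := by ring
      rw [this]
      calc ((1 * (2 * k + 1) + 1) * (1 * 1 * (2 * k + 1 + 1) + 1 + 1)) / (2 * 1 * r0 * 1 * 1)
          = (2 * k + 2) * (2 * k + 4) / (2 * r0) := by ring
        _ < (n : ℝ) * (r0 - 1) / r0 ^ 2 := key
    · exact key
end
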